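/- arXiv:1604.02964 — 4 statements merged into one kernel-verified Lean document; each statement's English description precedes it below -/
import Mathlib

section
/- The gamma ratio asymptotic: for fixed complex λ with Re(λ) > 0 and fixed real s > 0, the product γ_n = ∏_{j=0}^{n-1} (1 + λ/(r j + s)) (with r > 0) satisfies γ_n = (Γ(s/r) / Γ((s+λ)/r)) · n^{λ/r} + O(n^{Re(λ)/r − 1}) as n → ∞. -/
open Filter Asymptotics

namespace GRAux
open Finset Topology

lemma log_bounds {n : ℕ} (hn : 1 ≤ n) :
    Real.log (1 + 1/(n:ℝ)) ≤ 1/(n:ℝ) ∧ 1/(n:ℝ) - Real.log (1 + 1/(n:ℝ)) ≤ 1/(n:ℝ)^2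
      ∧ 0 ≤ Real.log (1 + 1/(n:ℝ)) := by
  have hn' : (0:ℝ) < n := by exact_mod_cast hn
  set x : ℝ := 1/(n:ℝ) with hx
  have hxx : x^2 = 1/(n:ℝ)^2 := by rw [hx]; field_simp
  have hx0 : 0 < x := by positivity
  have h1 : (0:ℝ) < 1 + x := by linarith
  have hub : Real.log (1 + x) ≤ x := by
    have := Real.log_le_sub_one_of_pos h1; linarith
  have hlb : x / (1 + x) ≤ Real.log (1 + x) := by
    have h2 := Real.log_le_sub_one_of_pos (x := (1 + x)⁻¹) (by positivity)
    rw [Real.log_inv] at h2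
    have h3 : 1 - (1+x)⁻¹ ≤ Real.log (1+x) := by linarith
    have h4 : x / (1 + x) = 1 - (1+x)⁻¹ := by field_simp; ring
    linarith
  refine ⟨hub, ?_, le_trans (by positivity) hlb⟩
  have h5 : x - x/(1+x) ≤ x^2 := by
    have h6 : x - x/(1+x) = x^2/(1+x) := by field_simp; ring
    rw [h6, div_le_iff₀ h1]
    nlinarith
  linarith

lemma tail_bound {f : ℕ → ℂ} {L : ℂ} {K : ℝ} {N : ℕ} (hN : 1 ≤ N)
    (hf : Tendsto f atTop (𝓝 L))
    (hd : ∀ n, N ≤ n → ‖f (n+1) - f n‖ ≤ K / (n:ℝ)^2) :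
    ∀ n, N ≤ n → ‖f n - L‖ ≤ 2*K/(n:ℝ) := by
  have hK : 0 ≤ K := by
    have h0 := le_trans (norm_nonneg _) (hd N le_rfl)
    have h2 : (0:ℝ) < (N:ℝ)^2 := by positivity
    rcases div_nonneg_iff.mp h0 with h | h
    · exact h.1
    · nlinarith [h.2]
  intro n hn
  have hn1 : 1 ≤ n := le_trans hN hn
  have hn0 : (0:ℝ) < n := by exact_mod_cast hn1
  -- finite sum bound
  have hfin : ∀ m : ℕ, ∑ k ∈ range m, ‖f (n+k+1) - f (n+k)‖ ≤ 2*K/(n:ℝ) := by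
    intro m
    have step : ∀ k : ℕ, ‖f (n+k+1) - f (n+k)‖ ≤ 2*K * (1/(n+k:ℝ) - 1/((n+k:ℝ)+1)) := by
      intro k
      have hnk : (1:ℝ) ≤ (n+k:ℝ) := by
        have : (1:ℝ) ≤ (n:ℝ) := by exact_mod_cast hn1
        have : (0:ℝ) ≤ (k:ℝ) := Nat.cast_nonneg _
        linarith
      have h1 := hd (n+k) (le_trans hn (Nat.le_add_right _ _))
      have h2 : K / ((n+k:ℕ):ℝ)^2 ≤ 2*K * (1/(n+k:ℝ) - 1/((n+k:ℝ)+1)) := by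
        push_cast
        have hrhs : 2*K * (1/(n+k:ℝ) - 1/((n+k:ℝ)+1)) = 2*K/((n+k:ℝ)*((n+k:ℝ)+1)) := by
          field_simp
          try ring
        rw [hrhs, div_le_div_iff₀ (by positivity) (by positivity)]
        nlinarith [mul_nonneg (mul_nonneg hK (by linarith : (0:ℝ) ≤ (n+k:ℝ))) (by linarith : (0:ℝ) ≤ (n+k:ℝ) - 1)]
      calc ‖f (n+k+1) - f (n+k)‖ ≤ K / ((n+k:ℕ):ℝ)^2 := by
            convert h1 using 3 <;> omega
        _ ≤ _ := h2
    calc ∑ k ∈ range m, ‖f (n+k+1) - f (n+k)‖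
        ≤ ∑ k ∈ range m, 2*K * (1/(n+k:ℝ) - 1/((n+k:ℝ)+1)) :=
          Finset.sum_le_sum fun k _ => step k
      _ = 2*K * (1/(n:ℝ) - 1/((n:ℝ)+m)) := by
          rw [← Finset.mul_sum]
          congr 1
          have := Finset.sum_range_sub' (f := fun k => 1/((n:ℝ)+k)) m
          simpa [add_assoc] using this
      _ ≤ 2*K/(n:ℝ) := by
          have : (0:ℝ) ≤ 1/((n:ℝ)+m) := by positivity
          rw [mul_sub]
          have h2 : 0 ≤ 2*K*(1/((n:ℝ)+m)) := by positivity
          rw [mul_one_div]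
          linarith
  have hsn : Summable fun k => ‖f (n+k+1) - f (n+k)‖ :=
    summable_of_sum_range_le (fun k => norm_nonneg _) hfin
  have hsum : Summable fun k => f (n+k+1) - f (n+k) := hsn.of_norm
  have htel : ∀ m : ℕ, ∑ k ∈ range m, (f (n+k+1) - f (n+k)) = f (n+m) - f n := by
    intro m
    exact Finset.sum_range_sub (f := fun k => f (n+k)) m
  have hlim : Tendsto (fun m => ∑ k ∈ range m, (f (n+k+1) - f (n+k))) atTop (𝓝 (L - f n)) := by
    simp only [htel]
    have h9 : Tendsto (fun m => f (n+m)) atTop (𝓝 L) := by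
      rw [show (fun m => f (n+m)) = (fun m => f (m+n)) by funext m; rw [add_comm]]
      exact hf.comp (tendsto_add_atTop_nat n)
    exact h9.sub_const _
  have hts : ∑' k, (f (n+k+1) - f (n+k)) = L - f n :=
    tendsto_nhds_unique hsum.hasSum.tendsto_sum_nat hlim
  have : ‖f n - L‖ = ‖L - f n‖ := by rw [norm_sub_rev]
  rw [this, ← hts]
  calc ‖∑' k, (f (n+k+1) - f (n+k))‖ ≤ ∑' k, ‖f (n+k+1) - f (n+k)‖ :=
        norm_tsum_le_tsum_norm hsn
    _ ≤ 2*K/(n:ℝ) := Real.tsum_le_of_sum_range_le (fun k => norm_nonneg _) hfin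

end GRAux

open Finset Topology in
/-- Gamma ratio asymptotics for the product `γ_n = ∏_{j<n} (1 + λ/(r j + s))`. -/
theorem gamma_ratio_asymptotic (r s : ℝ) (hr : 0 < r) (hs : 0 < s)
    (lm : ℂ) (hlm : 0 < lm.re) :
    (fun n : ℕ => (∏ j ∈ Finset.range n, (1 + lm / ((r : ℂ) * j + s))) -
        (Complex.Gamma ((s : ℂ) / r) / Complex.Gamma (((s : ℂ) + lm) / r)) *
          (n : ℂ) ^ (lm / (r : ℂ)))
      =O[atTop] fun n : ℕ => (n : ℝ) ^ (lm.re / r - 1) := by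
  have hr0 : (r:ℂ) ≠ 0 := Complex.ofReal_ne_zero.mpr hr.ne'
  have hofR : ∀ x:ℝ, ‖(x:ℂ)‖ = |x| := fun x => by
    rw [Complex.norm_real, Real.norm_eq_abs]
  set w : ℂ := lm / (r:ℂ) with hw
  set a : ℂ := (s:ℂ)/(r:ℂ) with ha
  set b : ℂ := ((s:ℂ)+lm)/(r:ℂ) with hb
  have hare : 0 < a.re := by rw [ha, Complex.div_ofReal_re]; positivity
  have hbre : 0 < b.re := by
    rw [hb, Complex.div_ofReal_re, Complex.add_re, Complex.ofReal_re]
    positivity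
  have hwre : w.re = lm.re / r := by rw [hw, Complex.div_ofReal_re]
  have haw : a + w = b := by rw [ha, hw, hb]; field_simp
  set C : ℂ := Complex.Gamma a / Complex.Gamma b with hC
  set P : ℕ → ℂ := fun n => ∏ j ∈ Finset.range n, (1 + lm / ((r:ℂ)*j + s)) with hP
  set f : ℕ → ℂ := fun n => P n * (n:ℂ)^(-w) with hf
  -- factor nonvanishing
  have hzj : ∀ (z:ℂ), 0 < z.re → ∀ j:ℕ, z + (j:ℂ) ≠ 0 := by
    intro z hz j h
    have : (z + (j:ℂ)).re = z.re + j := by simp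
    rw [h] at this
    simp at this
    have : (0:ℝ) ≤ (j:ℝ) := Nat.cast_nonneg _
    linarith
  have hprodne : ∀ (z:ℂ), 0 < z.re → ∀ m:ℕ, (∏ j ∈ range (m+1), (z + (j:ℂ))) ≠ 0 :=
    fun z hz m => Finset.prod_ne_zero_iff.mpr fun j _ => hzj z hz j
  have hρ : ∀ n:ℕ, (r:ℂ)*(n:ℂ) + (s:ℂ) = ((r*(n:ℝ)+s : ℝ):ℂ) := by intro n; push_cast; ring
  have hρpos : ∀ n:ℕ, 0 < r*(n:ℝ)+s := by
    intro n
    have : (0:ℝ) ≤ (n:ℝ) := Nat.cast_nonneg _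
    nlinarith
  have hfact : ∀ j:ℕ, 1 + lm/((r:ℂ)*(j:ℂ)+(s:ℂ)) = (b + (j:ℂ))/(a + (j:ℂ)) := by
    intro j
    have h1 : (r:ℂ)*(j:ℂ)+(s:ℂ) ≠ 0 := by
      rw [hρ j]; exact_mod_cast Complex.ofReal_ne_zero.mpr (hρpos j).ne'
    have h2 : a + (j:ℂ) ≠ 0 := hzj a hare j
    rw [eq_div_iff h2, ha, hb]
    field_simp
    ring
  have hPm : ∀ m:ℕ, P (m+1) = (∏ j ∈ range (m+1), (b + (j:ℂ))) / (∏ j ∈ range (m+1), (a + (j:ℂ))) := by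
    intro m
    rw [hP]
    simp only [hfact]
    rw [Finset.prod_div_distrib]
  -- cpow facts
  have hcpne : ∀ (m:ℕ), m ≠ 0 → ∀ z:ℂ, ((m:ℕ):ℂ)^z ≠ 0 := by
    intro m hm z
    have : ((m:ℕ):ℂ) ≠ 0 := Nat.cast_ne_zero.mpr hm
    rw [Complex.cpow_def_of_ne_zero this]
    exact Complex.exp_ne_zero _
  have hcpexp : ∀ (m:ℕ), m ≠ 0 → ∀ z:ℂ, ((m:ℕ):ℂ)^z = Complex.exp ((Real.log m : ℂ) * z) := by
    intro m hm z
    have h1 : ((m:ℕ):ℂ) ≠ 0 := Nat.cast_ne_zero.mpr hm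
    rw [Complex.cpow_def_of_ne_zero h1, Complex.natCast_log]
  -- the key identity with GammaSeq
  have hfm : ∀ m:ℕ, m ≠ 0 → f (m+1) =
      Complex.GammaSeq a m / Complex.GammaSeq b m *
        (((m:ℕ):ℂ)^w * (((m+1:ℕ)):ℂ)^(-w)) := by
    intro m hm
    have hm0 : ((m:ℕ):ℂ) ≠ 0 := Nat.cast_ne_zero.mpr hm
    have hab : ((m:ℕ):ℂ)^a * ((m:ℕ):ℂ)^w = ((m:ℕ):ℂ)^b := by
      rw [← Complex.cpow_add _ _ hm0, haw]
    have hfac : ((m.factorial : ℕ) : ℂ) ≠ 0 := Nat.cast_ne_zero.mpr (Nat.factorial_ne_zero m)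
    rw [hf]
    simp only
    rw [hPm m, Complex.GammaSeq, Complex.GammaSeq]
    push_cast
    field_simp [hprodne a hare m, hprodne b hbre m, hcpne m hm]
    linear_combination (-1:ℂ) * hab
  have hPsucc : ∀ n:ℕ, P (n+1) = P n * (1 + lm/((r:ℂ)*(n:ℂ)+(s:ℂ))) := by
    intro n; rw [hP]; exact Finset.prod_range_succ _ _
  -- limit of the cpow correction factor
  have hg1 : Tendsto (fun m:ℕ => ((m:ℕ):ℂ)^w * (((m+1:ℕ)):ℂ)^(-w)) atTop (𝓝 1) := by
    have hlog : ∀ m:ℕ, m ≠ 0 → Real.log (1 + 1/(m:ℝ)) = Real.log ((m:ℝ)+1) - Real.log (m:ℝ) := by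
      intro m hm
      have hm0 : (0:ℝ) < m := by
        have : 0 < m := Nat.pos_of_ne_zero hm; exact_mod_cast this
      rw [← Real.log_div (by positivity) (by positivity)]
      congr 1; field_simp
    have heq : ∀ᶠ m:ℕ in atTop, Complex.exp (-(w * ((Real.log (1 + 1/(m:ℝ)) : ℝ):ℂ)))
        = ((m:ℕ):ℂ)^w * (((m+1:ℕ)):ℂ)^(-w) := by
      filter_upwards [eventually_ge_atTop 1] with m hm
      rw [hcpexp m (by omega), hcpexp (m+1) (by omega), ← Complex.exp_add]
      congr 1
      rw [hlog m (by omega)]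
      push_cast
      ring
    have h2 : Tendsto (fun m:ℕ => Real.log (1 + 1/(m:ℝ))) atTop (𝓝 0) := by
      have h3 : Tendsto (fun m:ℕ => 1 + 1/(m:ℝ)) atTop (𝓝 1) := by
        simpa using (tendsto_const_nhds : Tendsto (fun _ : ℕ => (1:ℝ)) atTop (𝓝 1)).add (tendsto_one_div_atTop_nhds_zero_nat)
      have h4 := (Real.continuousAt_log (by norm_num : (1:ℝ) ≠ 0)).tendsto.comp h3
      simpa [Function.comp_def] using h4
    have h5 : Tendsto (fun m:ℕ => -(w * ((Real.log (1 + 1/(m:ℝ)) : ℝ):ℂ))) atTop (𝓝 0) := by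
      have h6 : Tendsto (fun m:ℕ => ((Real.log (1 + 1/(m:ℝ)) : ℝ):ℂ)) atTop (𝓝 0) := by
        have := (Complex.continuous_ofReal.tendsto 0).comp h2
        simpa [Function.comp_def] using this
      simpa using (h6.const_mul w).neg
    have h7 := (Complex.continuous_exp.tendsto 0).comp h5
    rw [Complex.exp_zero] at h7
    exact h7.congr' heq
  have hΓb : Complex.Gamma b ≠ 0 := Complex.Gamma_ne_zero_of_re_pos hbre
  have htend : Tendsto f atTop (𝓝 C) := by
    rw [← tendsto_add_atTop_iff_nat 1]
    have heq2 : ∀ᶠ m:ℕ in atTop, Complex.GammaSeq a m / Complex.GammaSeq b m *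
        (((m:ℕ):ℂ)^w * (((m+1:ℕ)):ℂ)^(-w)) = f (m+1) := by
      filter_upwards [eventually_ge_atTop 1] with m hm
      exact (hfm m (by omega)).symm
    have h8 := ((Complex.GammaSeq_tendsto_Gamma a).div (Complex.GammaSeq_tendsto_Gamma b) hΓb).mul hg1
    rw [mul_one] at h8
    exact h8.congr' heq2
  -- difference identity
  have hdiff : ∀ n:ℕ, n ≠ 0 → f (n+1) = f n *
      ((1 + lm/((r:ℂ)*(n:ℂ)+(s:ℂ))) * Complex.exp (-(w * ((Real.log (1+1/(n:ℝ)) : ℝ):ℂ)))) := by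
    intro n hn
    have hm0 : (0:ℝ) < n := by
      have : 0 < n := Nat.pos_of_ne_zero hn; exact_mod_cast this
    have hlog : Real.log (1 + 1/(n:ℝ)) = Real.log ((n:ℝ)+1) - Real.log (n:ℝ) := by
      rw [← Real.log_div (by positivity) (by positivity)]
      congr 1; field_simp
    rw [hf]
    simp only
    rw [hPsucc n, hcpexp (n+1) (by omega), hcpexp n hn]
    rw [show Complex.exp ((Real.log ((n+1:ℕ):ℝ) : ℂ) * (-w)) =
        Complex.exp ((Real.log (n:ℝ) : ℂ) * (-w)) *
          Complex.exp (-(w * ((Real.log (1+1/(n:ℝ)) : ℝ):ℂ))) from by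
      rw [← Complex.exp_add]
      congr 1
      rw [hlog]
      push_cast
      ring]
    ring
  -- error factor estimate
  set K0 : ℝ := 3*‖w‖^2 + ‖w‖*(s/r + 1) with hK0
  have hK0nn : 0 ≤ K0 := by positivity
  have hδ : ∀ n:ℕ, 1 ≤ n → ‖w‖ ≤ (n:ℝ) →
      ‖(1 + lm/((r:ℂ)*(n:ℂ)+(s:ℂ))) * Complex.exp (-(w * ((Real.log (1+1/(n:ℝ)) : ℝ):ℂ))) - 1‖
        ≤ K0 / (n:ℝ)^2 := by
    intro n hn1 hnw
    have hn0 : (0:ℝ) < n := by exact_mod_cast hn1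
    obtain ⟨ht1, ht2, ht3⟩ := GRAux.log_bounds hn1
    set t : ℝ := Real.log (1 + 1/(n:ℝ)) with htdef
    set u : ℂ := lm/((r:ℂ)*(n:ℂ)+(s:ℂ)) with hu
    set v : ℂ := w * (t:ℂ) with hv
    have hρn := hρpos n
    have hueq : u = w * ((r/(r*(n:ℝ)+s) : ℝ):ℂ) := by
      rw [hu, hw, hρ n]
      push_cast
      rw [div_mul_div_comm, mul_comm lm (r:ℂ), mul_div_mul_left _ _ hr0]
    have hnv : ‖v‖ ≤ ‖w‖ / n := by
      rw [hv, norm_mul, hofR _]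
      have : ‖t‖ ≤ 1/(n:ℝ) := by
        rw [Real.norm_eq_abs, _root_.abs_of_nonneg ht3]; exact ht1
      calc ‖w‖ * ‖t‖ ≤ ‖w‖ * (1/(n:ℝ)) := by
            exact mul_le_mul_of_nonneg_left this (norm_nonneg _)
        _ = ‖w‖ / n := by ring
    have hv1 : ‖v‖ ≤ 1 := by
      refine le_trans hnv ?_
      rw [div_le_one hn0]
      exact hnw
    have hnu : ‖u‖ ≤ ‖w‖ / n := by
      rw [hueq, norm_mul, hofR _]
      have h1 : ‖r/(r*(n:ℝ)+s)‖ ≤ 1/(n:ℝ) := by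
        rw [Real.norm_eq_abs, abs_of_nonneg (by positivity)]
        rw [div_le_div_iff₀ hρn hn0]
        nlinarith
      calc ‖w‖ * ‖r/(r*(n:ℝ)+s)‖ ≤ ‖w‖ * (1/(n:ℝ)) :=
            mul_le_mul_of_nonneg_left h1 (norm_nonneg _)
        _ = ‖w‖ / n := by ring
    have huv : ‖u - v‖ ≤ ‖w‖ * (s/r + 1) / (n:ℝ)^2 := by
      have h1 : u - v = w * ((r/(r*(n:ℝ)+s) - t : ℝ):ℂ) := by
        rw [hueq, hv]
        push_cast
        ring
      rw [h1, norm_mul, hofR _]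
      have h2 : ‖r/(r*(n:ℝ)+s) - t‖ ≤ (s/r + 1) / (n:ℝ)^2 := by
        rw [Real.norm_eq_abs]
        have h3 : 1/(n:ℝ) - r/(r*(n:ℝ)+s) = s/((r*(n:ℝ)+s)*(n:ℝ)) := by
          field_simp
          ring
        have h4 : 0 ≤ 1/(n:ℝ) - r/(r*(n:ℝ)+s) := by rw [h3]; positivity
        have h5 : 1/(n:ℝ) - r/(r*(n:ℝ)+s) ≤ (s/r)/(n:ℝ)^2 := by
          rw [h3, div_le_div_iff₀ (by positivity) (by positivity)]
          have hexp : s/r * ((r*(n:ℝ)+s)*(n:ℝ)) = s*(n:ℝ)^2 + (s^2/r)*(n:ℝ) := by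
            field_simp
          have hpos : 0 ≤ (s^2/r)*(n:ℝ) := by positivity
          linarith
        have h6 : |r/(r*(n:ℝ)+s) - t| ≤ (1/(n:ℝ) - r/(r*(n:ℝ)+s)) + (1/(n:ℝ) - t) := by
          rw [abs_le]
          constructor <;> linarith [ht1, h4]
        calc |r/(r*(n:ℝ)+s) - t| ≤ (s/r)/(n:ℝ)^2 + 1/(n:ℝ)^2 := by
              refine le_trans h6 ?_
              have := ht2
              linarith
          _ = (s/r + 1) / (n:ℝ)^2 := by ring
      calc ‖w‖ * ‖r/(r*(n:ℝ)+s) - t‖ ≤ ‖w‖ * ((s/r + 1) / (n:ℝ)^2) :=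
            mul_le_mul_of_nonneg_left h2 (norm_nonneg _)
        _ = ‖w‖ * (s/r + 1) / (n:ℝ)^2 := by ring
    have hdec : (1+u) * Complex.exp (-v) - 1 =
        (Complex.exp (-v) - 1 - (-v)) + u*(Complex.exp (-v) - 1) + (u - v) := by ring
    have hnegv : ‖-v‖ ≤ 1 := by rwa [norm_neg]
    have habs : ‖-v‖ ≤ 1 := hnegv
    have e1 : ‖Complex.exp (-v) - 1 - (-v)‖ ≤ ‖v‖^2 := by
      simpa [norm_neg] using Complex.norm_exp_sub_one_sub_id_le (x := -v) habs
    have e2 : ‖Complex.exp (-v) - 1‖ ≤ 2 * ‖v‖ := by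
      simpa [norm_neg] using Complex.norm_exp_sub_one_le (x := -v) habs
    have hw0 : (0:ℝ) ≤ ‖w‖ := norm_nonneg _
    calc ‖(1+u) * Complex.exp (-v) - 1‖
        ≤ ‖Complex.exp (-v) - 1 - (-v)‖ + ‖u*(Complex.exp (-v) - 1)‖ + ‖u - v‖ := by
          rw [hdec]
          exact le_trans (norm_add_le _ _) (by gcongr; exact norm_add_le _ _)
      _ ≤ ‖v‖^2 + ‖u‖*(2*‖v‖) + ‖w‖ * (s/r + 1) / (n:ℝ)^2 := by
          gcongr
          rw [norm_mul]
          exact mul_le_mul_of_nonneg_left e2 (norm_nonneg _)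
      _ ≤ (‖w‖/n)^2 + (‖w‖/n)*(2*(‖w‖/n)) + ‖w‖ * (s/r + 1) / (n:ℝ)^2 := by
          gcongr <;> first | exact norm_nonneg _ | exact hnu | exact hnv
      _ = K0 / (n:ℝ)^2 := by
          rw [hK0]
          ring
  -- eventual bound on ‖f‖ and difference bound
  have hbd : ∀ᶠ n:ℕ in atTop, ‖f n‖ ≤ ‖C‖ + 1 := by
    have h1 : Tendsto (fun n => ‖f n‖) atTop (𝓝 ‖C‖) := htend.norm
    exact h1.eventually_le_const (lt_add_one ‖C‖)
  obtain ⟨N₀, hN₀⟩ := eventually_atTop.mp hbd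
  set N : ℕ := max (max N₀ 1) ⌈‖w‖⌉₊ with hN
  have hN1 : 1 ≤ N := le_trans (le_max_right N₀ 1) (le_max_left _ _)
  set K : ℝ := (‖C‖ + 1) * K0 with hKdef
  have hKd : ∀ n, N ≤ n → ‖f (n+1) - f n‖ ≤ K / (n:ℝ)^2 := by
    intro n hn
    have hn1 : 1 ≤ n := le_trans hN1 hn
    have hnN₀ : N₀ ≤ n := le_trans (le_trans (le_max_left N₀ 1) (le_max_left _ _)) hn
    have hnw : ‖w‖ ≤ (n:ℝ) := by
      have h1 : (⌈‖w‖⌉₊ : ℝ) ≤ n := by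
        exact_mod_cast le_trans (le_max_right _ _) hn
      exact le_trans (Nat.le_ceil _) h1
    have h2 := hdiff n (by omega)
    rw [h2]
    have h3 : f n * ((1 + lm/((r:ℂ)*(n:ℂ)+(s:ℂ))) *
        Complex.exp (-(w * ((Real.log (1+1/(n:ℝ)) : ℝ):ℂ)))) - f n =
        f n * ((1 + lm/((r:ℂ)*(n:ℂ)+(s:ℂ))) *
          Complex.exp (-(w * ((Real.log (1+1/(n:ℝ)) : ℝ):ℂ))) - 1) := by ring
    rw [h3, norm_mul]
    calc ‖f n‖ * ‖_‖ ≤ (‖C‖ + 1) * (K0 / (n:ℝ)^2) :=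
          mul_le_mul (hN₀ n hnN₀) (hδ n hn1 hnw) (norm_nonneg _)
            (by positivity)
      _ = K / (n:ℝ)^2 := by rw [hKdef]; ring
  have htail := GRAux.tail_bound hN1 htend hKd
  -- final assembly
  rw [isBigO_iff]
  refine ⟨2*K, ?_⟩
  filter_upwards [eventually_ge_atTop N, eventually_ge_atTop 1] with n hnN hn1
  have hn0 : (0:ℝ) < n := by exact_mod_cast hn1
  have hPf : P n = f n * ((n:ℕ):ℂ)^w := by
    rw [hf]
    simp only
    rw [mul_assoc, Complex.cpow_neg, inv_mul_cancel₀ (hcpne n (by omega) w), mul_one]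
  have hsplit : P n - C * ((n:ℕ):ℂ)^w = (f n - C) * ((n:ℕ):ℂ)^w := by
    rw [hPf]; ring
  have hnorm : ‖((n:ℕ):ℂ)^w‖ = (n:ℝ)^w.re := by
    rw [show ((n:ℕ):ℂ) = (((n:ℝ)):ℂ) by push_cast; rfl]
    rw [Complex.norm_cpow_eq_rpow_re_of_pos hn0]
  have hKnn : 0 ≤ K := by
    rw [hKdef]
    exact mul_nonneg (add_nonneg (norm_nonneg _) zero_le_one) hK0nn
  calc ‖P n - C * ((n:ℕ):ℂ)^w‖ = ‖f n - C‖ * (n:ℝ)^w.re := by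
        rw [hsplit, norm_mul, hnorm]
    _ ≤ (2*K/(n:ℝ)) * (n:ℝ)^w.re := by
        exact mul_le_mul_of_nonneg_right (htail n hnN) (Real.rpow_nonneg hn0.le _)
    _ = 2*K * (n:ℝ)^(w.re - 1) := by
        rw [Real.rpow_sub hn0, Real.rpow_one]
        ring
    _ ≤ 2*K * ‖(n:ℝ)^(lm.re/r - 1)‖ := by
        rw [hwre, Real.norm_eq_abs, abs_of_nonneg (Real.rpow_nonneg hn0.le _)]
end

section
/- Zero-variance rigidity: if E[|Ξ_k|²] = 0 for the limit Ξ_k of the projection martingale, then for all j ≥ 0 almost surely π_k(X_{j+1} − X_j) = (λ̄_k/(r j + |X_0|)) π_k(X_j); in particular the value of π_k(X_{j+1} − X_j) does not depend on the colour drawn at step j+1. -/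
open MeasureTheory Filter

/-- Zero-variance rigidity: if the limit `Ξ` of the projection martingale satisfies
`E[|Ξ|²] = 0`, then for all `j` almost surely
`π(X (j+1) − X j) = (conj lam/(r j + S)) π(X j)`; in particular the jump of the
projection does not depend on the colour drawn at step `j+1`. -/
theorem zero_variance_rigidity
    {Ω : Type*} {mΩ : MeasurableSpace Ω} {μ : Measure Ω} [IsProbabilityMeasure μ]
    {q : ℕ} (Δ : Fin q → Fin q → ℝ) (r S : ℝ) (hr : 0 < r) (hS : 0 < S)
    (u : Fin q → ℂ) (lam : ℂ)
    (hu : ∀ j : Fin q, ∑ i : Fin q, u i * (Δ j i : ℂ) = lam * u j)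
    (hbig : r / 2 < lam.re)
    (F : Filtration ℕ mΩ) (X : ℕ → Ω → Fin q → ℝ) (N : ℕ → Ω → Fin q)
    (x0 : Fin q → ℝ) (hX0 : ∀ ω, X 0 ω = x0) (hS0 : S = ∑ i : Fin q, x0 i)
    (hstep : ∀ n ω j, X (n + 1) ω j = X n ω j + Δ (N (n + 1) ω) j)
    (hN : ∀ n, Measurable[F n] (N n))
    (hcond : ∀ n (i : Fin q) (g : Ω → ℝ), StronglyMeasurable[F n] g → Integrable g μ →
      μ[(fun ω => (if N (n + 1) ω = i then (1 : ℝ) else 0) * g ω) | F n]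
        =ᵐ[μ] fun ω => X n ω i / (r * n + S) * g ω)
    (π : (Fin q → ℝ) → ℂ)
    (hπ : ∀ x, π x = ∑ i : Fin q, (starRingEnd ℂ) (u i) * (x i : ℂ))
    (M : ℕ → Ω → ℂ)
    (hM : ∀ n ω, M n ω =
      (∏ j ∈ Finset.range n, (1 + (starRingEnd ℂ) lam / ((r : ℂ) * j + S)))⁻¹ *
        (π (X n ω) - ∫ ω', π (X n ω') ∂μ))
    (Ξ : Ω → ℂ)
    (hlim : ∀ᵐ ω ∂μ, Tendsto (fun n => M n ω) atTop (nhds (Ξ ω)))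
    (hL2 : Tendsto (fun n => eLpNorm (fun ω => M n ω - Ξ ω) 2 μ) atTop (nhds 0))
    (hvar : (∫ ω, ‖Ξ ω‖ ^ 2 ∂μ) = 0) :
    ∀ j : ℕ, ∀ᵐ ω ∂μ,
      π (X (j + 1) ω) - π (X j ω) =
        (starRingEnd ℂ) lam / ((r : ℂ) * j + S) * π (X j ω) := by
  have hlam : 0 < lam.re := lt_of_le_of_lt (by positivity) hbig
  have hrs : ∀ n : ℕ, (0:ℝ) < r * n + S := fun n => by positivity
  have hden : ∀ n : ℕ, ((r:ℂ) * n + S) = ((r * n + S : ℝ) : ℂ) := fun n => by push_cast; ring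
  set a : ℕ → ℂ := fun n => (starRingEnd ℂ) lam / ((r:ℂ) * n + S) with ha
  have hare : ∀ n : ℕ, (a n).re = lam.re / (r * n + S) := by
    intro n
    rw [ha]
    simp only
    rw [hden n, Complex.div_ofReal_re, Complex.conj_re]
  have ha0 : ∀ n, (1 + a n) ≠ 0 := by
    intro n
    have h : 0 < (1 + a n).re := by
      rw [Complex.add_re, Complex.one_re, hare n]
      have := hrs n
      positivity
    intro hcontra
    rw [hcontra] at h
    simp at h
  set c : ℕ → ℂ := fun n => (∏ j ∈ Finset.range n, (1 + a j))⁻¹ with hc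
  have hc0 : ∀ n, c n ≠ 0 := fun n =>
    inv_ne_zero (Finset.prod_ne_zero_iff.2 fun j _ => ha0 j)
  have hcrec : ∀ n, c (n+1) * (1 + a n) = c n := by
    intro n
    rw [hc]
    simp only [Finset.prod_range_succ, mul_inv]
    rw [mul_assoc, inv_mul_cancel₀ (ha0 n), mul_one]
  -- measurability of X
  have hXm : ∀ n, Measurable[F n] (X n) := by
    intro n
    induction n with
    | zero =>
      have h : X 0 = fun _ => x0 := funext hX0
      rw [h]; exact measurable_const
    | succ n ih =>
      refine @measurable_pi_iff _ _ _ (F (n+1)) _ _ |>.mpr fun j => ?_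
      have h1 : Measurable[F (n+1)] fun ω => X n ω j :=
        ((measurable_pi_apply j).comp ih).mono (F.mono n.le_succ) le_rfl
      have h2 : Measurable[F (n+1)] fun ω => Δ (N (n+1) ω) j :=
        (measurable_from_top (f := fun i => Δ i j)).comp (hN (n+1))
      have h3 : (fun ω => X (n+1) ω j) = fun ω => X n ω j + Δ (N (n+1) ω) j :=
        funext fun ω => hstep n ω j
      rw [h3]; exact h1.add h2
  have hπXm : ∀ n, Measurable[F n] fun ω => π (X n ω) := by
    intro n
    have h : (fun ω => π (X n ω)) = fun ω => ∑ i, (starRingEnd ℂ) (u i) * ((X n ω i : ℝ) : ℂ) :=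
      funext fun ω => hπ _
    rw [h]
    exact Finset.measurable_sum _ fun i _ =>
      measurable_const.mul (Complex.measurable_ofReal.comp ((measurable_pi_apply i).comp (hXm n)))
  have hπXM : ∀ n, Measurable fun ω => π (X n ω) := fun n => (hπXm n).mono (F.le n) le_rfl
  have hXM : ∀ n, Measurable (X n) := fun n => (hXm n).mono (F.le n) le_rfl
  have hΔb : ∀ p l, |Δ p l| ≤ ∑ p', ∑ l', |Δ p' l'| := by
    intro p l
    calc |Δ p l| ≤ ∑ l', |Δ p l'| :=
          Finset.single_le_sum (f := fun l' => |Δ p l'|) (fun _ _ => abs_nonneg _) (Finset.mem_univ l)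
      _ ≤ ∑ p', ∑ l', |Δ p' l'| :=
          Finset.single_le_sum (f := fun p' => ∑ l', |Δ p' l'|)
            (fun _ _ => Finset.sum_nonneg fun _ _ => abs_nonneg _) (Finset.mem_univ p)
  have hXbd : ∀ n, ∃ C, ∀ ω (i : Fin q), |X n ω i| ≤ C := by
    intro n
    induction n with
    | zero =>
      refine ⟨∑ i, |x0 i|, fun ω i => ?_⟩
      rw [hX0]
      exact Finset.single_le_sum (f := fun i => |x0 i|) (fun _ _ => abs_nonneg _) (Finset.mem_univ i)
    | succ n ih =>
      obtain ⟨C, hC⟩ := ih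
      refine ⟨C + ∑ p', ∑ l', |Δ p' l'|, fun ω i => ?_⟩
      rw [hstep n ω i]
      exact (abs_add_le _ _).trans (add_le_add (hC ω i) (hΔb _ _))
  -- pointwise jump
  have hjump : ∀ n ω, π (X (n+1) ω)
      = π (X n ω) + (starRingEnd ℂ) lam * (starRingEnd ℂ) (u (N (n+1) ω)) := by
    intro n ω
    have h2 : ∑ i, (starRingEnd ℂ) (u i) * ((Δ (N (n+1) ω) i : ℝ) : ℂ)
        = (starRingEnd ℂ) lam * (starRingEnd ℂ) (u (N (n+1) ω)) := by
      have h := congrArg (starRingEnd ℂ) (hu (N (n+1) ω))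
      simpa [map_sum, map_mul, Complex.conj_ofReal] using h
    rw [hπ, hπ]
    calc ∑ i, (starRingEnd ℂ) (u i) * ((X (n+1) ω i : ℝ) : ℂ)
        = ∑ i, ((starRingEnd ℂ) (u i) * ((X n ω i : ℝ):ℂ)
            + (starRingEnd ℂ) (u i) * ((Δ (N (n+1) ω) i : ℝ):ℂ)) := by
          refine Finset.sum_congr rfl fun i _ => ?_
          rw [hstep n ω i]; push_cast; ring
      _ = (∑ i, (starRingEnd ℂ) (u i) * ((X n ω i : ℝ):ℂ))
            + ∑ i, (starRingEnd ℂ) (u i) * ((Δ (N (n+1) ω) i : ℝ):ℂ) := Finset.sum_add_distrib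
      _ = _ := by rw [h2]
  -- boundedness
  have hubd : ∀ j : Fin q, ‖u j‖ ≤ ∑ i, ‖u i‖ := fun j =>
    Finset.single_le_sum (f := fun i => ‖u i‖) (fun i _ => norm_nonneg _) (Finset.mem_univ j)
  have hπbd : ∀ n, ∃ C, ∀ ω, ‖π (X n ω)‖ ≤ C := by
    intro n
    induction n with
    | zero => exact ⟨‖π x0‖, fun ω => by rw [hX0]⟩
    | succ n ih =>
      obtain ⟨C, hC⟩ := ih
      refine ⟨C + ‖lam‖ * ∑ i, ‖u i‖, fun ω => ?_⟩
      rw [hjump n ω]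
      refine (norm_add_le _ _).trans (add_le_add (hC ω) ?_)
      rw [norm_mul]
      simp only [RCLike.norm_conj]
      exact mul_le_mul_of_nonneg_left (hubd _) (norm_nonneg _)
  -- integrability helper
  have hint : ∀ (f : Ω → ℂ), AEStronglyMeasurable f μ → (∃ C, ∀ ω, ‖f ω‖ ≤ C) →
      Integrable f μ := by
    rintro f hf ⟨C, hC⟩
    exact Integrable.mono' (integrable_const C) hf (ae_of_all _ hC)
  have hintR : ∀ (f : Ω → ℝ), AEStronglyMeasurable f μ → (∃ C, ∀ ω, |f ω| ≤ C) →
      Integrable f μ := by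
    rintro f hf ⟨C, hC⟩
    exact Integrable.mono' (integrable_const C) hf (ae_of_all _ hC)
  -- indicator measurability
  have hsetm : ∀ n (i : Fin q), MeasurableSet {ω | N (n+1) ω = i} :=
    fun n i => ((hN (n+1)).mono (F.le (n+1)) le_rfl) (measurableSet_singleton i)
  have hindm : ∀ n (i : Fin q), Measurable fun ω => (if N (n+1) ω = i then (1:ℝ) else 0) :=
    fun n i => Measurable.ite (hsetm n i) measurable_const measurable_const
  -- the basic conditional-probability integral identity
  have hstarR : ∀ n (i : Fin q) (g : Ω → ℝ), Measurable[F n] g → (∃ C, ∀ ω, |g ω| ≤ C) →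
      (∫ ω, (if N (n+1) ω = i then (1:ℝ) else 0) * g ω ∂μ)
        = ∫ ω, X n ω i / (r * n + S) * g ω ∂μ := by
    rintro n i g hg hgb
    have hgm : Measurable g := hg.mono (F.le n) le_rfl
    have hgi : Integrable g μ := hintR g hgm.aestronglyMeasurable hgb
    have h1 := hcond n i g (hg.stronglyMeasurable) hgi
    obtain ⟨C, hC⟩ := hgb
    have hhi : Integrable (fun ω => (if N (n+1) ω = i then (1:ℝ) else 0) * g ω) μ := by
      refine hintR _ ((hindm n i).mul hgm).aestronglyMeasurable ⟨C, fun ω => ?_⟩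
      rw [abs_mul]
      calc |if N (n+1) ω = i then (1:ℝ) else 0| * |g ω| ≤ 1 * |g ω| := by
            apply mul_le_mul_of_nonneg_right _ (abs_nonneg _)
            split <;> simp
        _ ≤ C := by rw [one_mul]; exact hC ω
    calc (∫ ω, (if N (n+1) ω = i then (1:ℝ) else 0) * g ω ∂μ)
        = ∫ ω, (μ[(fun ω => (if N (n + 1) ω = i then (1 : ℝ) else 0) * g ω) | F n]) ω ∂μ :=
          (integral_condExp (F.le n)).symm
      _ = ∫ ω, X n ω i / (r * n + S) * g ω ∂μ := integral_congr_ae h1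
  -- complex version
  have hstarC : ∀ n (i : Fin q) (f : Ω → ℂ), Measurable f → (∃ C, ∀ ω, ‖f ω‖ ≤ C) →
      Measurable[F n] f →
      (∫ ω, (if N (n+1) ω = i then (1:ℂ) else 0) * f ω ∂μ)
        = ∫ ω, ((X n ω i / (r * n + S) : ℝ) : ℂ) * f ω ∂μ := by
    rintro n i f hfm ⟨C, hC⟩ hfFm
    have hkeyR : ∀ (g : Ω → ℝ), Measurable[F n] g → (∃ C, ∀ ω, |g ω| ≤ C) →
        (∫ ω, (if N (n+1) ω = i then (1:ℂ) else 0) * ((g ω : ℝ) : ℂ) ∂μ)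
          = ∫ ω, ((X n ω i / (r * n + S) : ℝ) : ℂ) * ((g ω : ℝ) : ℂ) ∂μ := by
      intro g hg hgb
      have h := hstarR n i g hg hgb
      calc (∫ ω, (if N (n+1) ω = i then (1:ℂ) else 0) * ((g ω : ℝ) : ℂ) ∂μ)
          = ∫ ω, (((if N (n+1) ω = i then (1:ℝ) else 0) * g ω : ℝ) : ℂ) ∂μ := by
            refine integral_congr_ae (ae_of_all _ fun ω => ?_)
            by_cases h' : N (n+1) ω = i <;> simp [h']
        _ = (((∫ ω, (if N (n+1) ω = i then (1:ℝ) else 0) * g ω ∂μ) : ℝ) : ℂ) := integral_ofReal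
        _ = (((∫ ω, X n ω i / (r * n + S) * g ω ∂μ) : ℝ) : ℂ) := by rw [h]
        _ = ∫ ω, ((X n ω i / (r * n + S) * g ω : ℝ) : ℂ) ∂μ := integral_ofReal.symm
        _ = ∫ ω, ((X n ω i / (r * n + S) : ℝ) : ℂ) * ((g ω : ℝ) : ℂ) ∂μ := by
            refine integral_congr_ae (ae_of_all _ fun ω => ?_)
            push_cast; ring
    -- split f into real and imaginary parts
    have hrem : Measurable[F n] fun ω => (f ω).re := Complex.measurable_re.comp hfFm
    have himm : Measurable[F n] fun ω => (f ω).im := Complex.measurable_im.comp hfFm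
    have hreb : ∃ C, ∀ ω, |(f ω).re| ≤ C := ⟨C, fun ω => (Complex.abs_re_le_norm _).trans (hC ω)⟩
    have himb : ∃ C, ∀ ω, |(f ω).im| ≤ C := ⟨C, fun ω => (Complex.abs_im_le_norm _).trans (hC ω)⟩
    have hre := hkeyR _ hrem hreb
    have him := hkeyR _ himm himb
    have hremM : Measurable fun ω => (((f ω).re : ℝ) : ℂ) :=
      Complex.measurable_ofReal.comp (Complex.measurable_re.comp hfm)
    have himmM : Measurable fun ω => (((f ω).im : ℝ) : ℂ) :=
      Complex.measurable_ofReal.comp (Complex.measurable_im.comp hfm)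
    have hi1 : Integrable (fun ω => (if N (n+1) ω = i then (1:ℂ) else 0) * (((f ω).re : ℝ) : ℂ)) μ := by
      refine hint _ (Measurable.aestronglyMeasurable ?_) ⟨C, fun ω => ?_⟩
      · exact (Measurable.ite (hsetm n i) measurable_const measurable_const).mul hremM
      · rw [norm_mul]
        calc ‖if N (n+1) ω = i then (1:ℂ) else 0‖ * ‖(((f ω).re : ℝ) : ℂ)‖
            ≤ 1 * ‖(((f ω).re : ℝ) : ℂ)‖ := by
              apply mul_le_mul_of_nonneg_right _ (norm_nonneg _)
              split <;> simp
          _ ≤ C := by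
              rw [one_mul, Complex.norm_real, Real.norm_eq_abs]
              exact (Complex.abs_re_le_norm _).trans (hC ω)
    have hi2 : Integrable (fun ω => (if N (n+1) ω = i then (1:ℂ) else 0) * (((f ω).im : ℝ) : ℂ)) μ := by
      refine hint _ (Measurable.aestronglyMeasurable ?_) ⟨C, fun ω => ?_⟩
      · exact (Measurable.ite (hsetm n i) measurable_const measurable_const).mul himmM
      · rw [norm_mul]
        calc ‖if N (n+1) ω = i then (1:ℂ) else 0‖ * ‖(((f ω).im : ℝ) : ℂ)‖
            ≤ 1 * ‖(((f ω).im : ℝ) : ℂ)‖ := by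
              apply mul_le_mul_of_nonneg_right _ (norm_nonneg _)
              split <;> simp
          _ ≤ C := by
              rw [one_mul, Complex.norm_real, Real.norm_eq_abs]
              exact (Complex.abs_im_le_norm _).trans (hC ω)
    have hXb : ∃ C', ∀ ω, ‖((X n ω i / (r * n + S) : ℝ) : ℂ)‖ ≤ C' := by
      obtain ⟨C0, hC0⟩ := hXbd n
      refine ⟨C0 / (r * n + S), fun ω => ?_⟩
      rw [Complex.norm_real, Real.norm_eq_abs, abs_div, abs_of_pos (hrs n)]
      exact (div_le_div_iff_of_pos_right (hrs n)).2 (hC0 ω i)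
    obtain ⟨C'0, hC'0pre⟩ := hXb
    set C' : ℝ := max C'0 0 with hC'def
    have hC' : ∀ ω, ‖((X n ω i / (r * n + S) : ℝ) : ℂ)‖ ≤ C' :=
      fun ω => (hC'0pre ω).trans (le_max_left _ _)
    have hC'0 : (0:ℝ) ≤ C' := le_max_right _ _
    have hXcm : Measurable fun ω => ((X n ω i / (r * ↑n + S) : ℝ) : ℂ) :=
      Complex.measurable_ofReal.comp (((measurable_pi_apply i).comp (hXM n)).div_const _)
    have hj1 : Integrable (fun ω => ((X n ω i / (r * ↑n + S) : ℝ):ℂ) * (((f ω).re : ℝ):ℂ)) μ := by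
      refine hint _ (hXcm.mul hremM).aestronglyMeasurable ⟨C' * C, fun ω => ?_⟩
      rw [norm_mul]
      have h2 : ‖(((f ω).re : ℝ):ℂ)‖ ≤ C := by
        rw [Complex.norm_real, Real.norm_eq_abs]
        exact (Complex.abs_re_le_norm _).trans (hC ω)
      exact mul_le_mul (hC' ω) h2 (norm_nonneg _) hC'0
    have hj2 : Integrable (fun ω => ((X n ω i / (r * ↑n + S) : ℝ):ℂ) * (((f ω).im : ℝ):ℂ)) μ := by
      refine hint _ (hXcm.mul himmM).aestronglyMeasurable ⟨C' * C, fun ω => ?_⟩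
      rw [norm_mul]
      have h2 : ‖(((f ω).im : ℝ):ℂ)‖ ≤ C := by
        rw [Complex.norm_real, Real.norm_eq_abs]
        exact (Complex.abs_im_le_norm _).trans (hC ω)
      exact mul_le_mul (hC' ω) h2 (norm_nonneg _) hC'0
    calc ∫ ω, (if N (n+1) ω = i then (1:ℂ) else 0) * f ω ∂μ
        = ∫ ω, ((if N (n+1) ω = i then (1:ℂ) else 0) * (((f ω).re:ℝ):ℂ)
            + ((if N (n+1) ω = i then (1:ℂ) else 0) * (((f ω).im:ℝ):ℂ)) * Complex.I) ∂μ := by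
          refine integral_congr_ae (ae_of_all _ fun ω => ?_)
          simp only
          conv_lhs => rw [← Complex.re_add_im (f ω)]
          ring
      _ = (∫ ω, (if N (n+1) ω = i then (1:ℂ) else 0) * (((f ω).re:ℝ):ℂ) ∂μ)
            + (∫ ω, (if N (n+1) ω = i then (1:ℂ) else 0) * (((f ω).im:ℝ):ℂ) ∂μ) * Complex.I := by
          rw [integral_add hi1 (hi2.mul_const _), integral_mul_const]
      _ = (∫ ω, ((X n ω i / (r * ↑n + S) : ℝ):ℂ) * (((f ω).re:ℝ):ℂ) ∂μ)
            + (∫ ω, ((X n ω i / (r * ↑n + S) : ℝ):ℂ) * (((f ω).im:ℝ):ℂ) ∂μ) * Complex.I := by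
          rw [hre, him]
      _ = ∫ ω, (((X n ω i / (r * ↑n + S) : ℝ):ℂ) * (((f ω).re:ℝ):ℂ)
            + (((X n ω i / (r * ↑n + S) : ℝ):ℂ) * (((f ω).im:ℝ):ℂ)) * Complex.I) ∂μ := by
          rw [integral_add hj1 (hj2.mul_const _), integral_mul_const]
      _ = ∫ ω, ((X n ω i / (r * n + S) : ℝ) : ℂ) * f ω ∂μ := by
          refine integral_congr_ae (ae_of_all _ fun ω => ?_)
          simp only
          conv_rhs => rw [← Complex.re_add_im (f ω)]
          ring
  -- key martingale-increment identity
  have hkey : ∀ n (f : Ω → ℂ), Measurable[F n] f → (∃ C, ∀ ω, ‖f ω‖ ≤ C) →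
      ∫ ω, π (X (n+1) ω) * f ω ∂μ = (1 + a n) * ∫ ω, π (X n ω) * f ω ∂μ := by
    rintro n f hfF ⟨C0, hC0⟩
    have hfM : Measurable f := hfF.mono (F.le n) le_rfl
    set Cf : ℝ := max C0 0 with hCfdef
    have hCf : ∀ ω, ‖f ω‖ ≤ Cf := fun ω => (hC0 ω).trans (le_max_left _ _)
    have hCf0 : (0:ℝ) ≤ Cf := le_max_right _ _
    obtain ⟨Cπ0, hCπ0⟩ := hπbd n
    set Cπ : ℝ := max Cπ0 0 with hCπdef
    have hCπ : ∀ ω, ‖π (X n ω)‖ ≤ Cπ := fun ω => (hCπ0 ω).trans (le_max_left _ _)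
    have hCπpos : (0:ℝ) ≤ Cπ := le_max_right _ _
    have hi_pf : Integrable (fun ω => π (X n ω) * f ω) μ := by
      refine hint _ ((hπXM n).mul hfM).aestronglyMeasurable ⟨Cπ * Cf, fun ω => ?_⟩
      rw [norm_mul]
      exact mul_le_mul (hCπ ω) (hCf ω) (norm_nonneg _) hCπpos
    have huNm : Measurable fun ω => (starRingEnd ℂ) (u (N (n+1) ω)) :=
      (measurable_from_top (f := fun i => (starRingEnd ℂ) (u i))).comp
        ((hN (n+1)).mono (F.le (n+1)) le_rfl)
    have hi_cu : Integrable (fun ω => (starRingEnd ℂ) (u (N (n+1) ω)) * f ω) μ := by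
      refine hint _ (huNm.mul hfM).aestronglyMeasurable ⟨(∑ i, ‖u i‖) * Cf, fun ω => ?_⟩
      rw [norm_mul, RCLike.norm_conj]
      exact mul_le_mul (hubd _) (hCf ω) (norm_nonneg _)
        (Finset.sum_nonneg fun _ _ => norm_nonneg _)
    obtain ⟨CX0, hCX0⟩ := hXbd n
    set CX : ℝ := max CX0 0 with hCXdef
    have hCX : ∀ ω (i : Fin q), |X n ω i| ≤ CX := fun ω i => (hCX0 ω i).trans (le_max_left _ _)
    have hCXpos : (0:ℝ) ≤ CX := le_max_right _ _
    have hterm1 : ∀ i : Fin q, Integrable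
        (fun ω => ((if N (n+1) ω = i then (1:ℂ) else 0) * (starRingEnd ℂ) (u i)) * f ω) μ := by
      intro i
      refine hint _ ((((Measurable.ite (hsetm n i) measurable_const measurable_const).mul
        measurable_const).mul hfM)).aestronglyMeasurable ⟨‖u i‖ * Cf, fun ω => ?_⟩
      rw [norm_mul, norm_mul, RCLike.norm_conj]
      have h1 : ‖(if N (n+1) ω = i then (1:ℂ) else 0)‖ ≤ 1 := by split <;> simp
      calc ‖if N (n+1) ω = i then (1:ℂ) else 0‖ * ‖u i‖ * ‖f ω‖
          ≤ 1 * ‖u i‖ * Cf := by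
            refine mul_le_mul (mul_le_mul h1 le_rfl (norm_nonneg _) zero_le_one) (hCf ω)
              (norm_nonneg _) (by positivity)
        _ = ‖u i‖ * Cf := by ring
    have hXcm : ∀ i : Fin q, Measurable fun ω => ((X n ω i / (r * ↑n + S) : ℝ) : ℂ) := fun i =>
      Complex.measurable_ofReal.comp (((measurable_pi_apply i).comp (hXM n)).div_const _)
    have hXcb : ∀ (i : Fin q) ω, ‖((X n ω i / (r * ↑n + S) : ℝ) : ℂ)‖ ≤ CX / (r * ↑n + S) := by
      intro i ω
      rw [Complex.norm_real, Real.norm_eq_abs, abs_div, abs_of_pos (hrs n)]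
      exact (div_le_div_iff_of_pos_right (hrs n)).2 (hCX ω i)
    have hterm2 : ∀ i : Fin q, Integrable
        (fun ω => (starRingEnd ℂ) (u i) * (((X n ω i / (r * ↑n + S) : ℝ) : ℂ) * f ω)) μ := by
      intro i
      refine hint _ (measurable_const.mul ((hXcm i).mul hfM)).aestronglyMeasurable
        ⟨‖u i‖ * (CX / (r * ↑n + S) * Cf), fun ω => ?_⟩
      rw [norm_mul, RCLike.norm_conj, norm_mul]
      refine mul_le_mul le_rfl ?_ (mul_nonneg (norm_nonneg _) (norm_nonneg _)) (norm_nonneg _)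
      refine mul_le_mul (hXcb i ω) (hCf ω) (norm_nonneg _) ?_
      positivity
    have hdec : ∀ ω, (starRingEnd ℂ) (u (N (n+1) ω))
        = ∑ i, (if N (n+1) ω = i then (1:ℂ) else 0) * (starRingEnd ℂ) (u i) := by
      intro ω
      simp [ite_mul, Finset.sum_ite_eq]
    have hcu : ∫ ω, (starRingEnd ℂ) (u (N (n+1) ω)) * f ω ∂μ
        = ((r:ℂ) * n + S)⁻¹ * ∫ ω, π (X n ω) * f ω ∂μ := by
      calc ∫ ω, (starRingEnd ℂ) (u (N (n+1) ω)) * f ω ∂μ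
          = ∫ ω, ∑ i, ((if N (n+1) ω = i then (1:ℂ) else 0) * (starRingEnd ℂ) (u i)) * f ω ∂μ := by
            refine integral_congr_ae (ae_of_all _ fun ω => ?_)
            simp only
            rw [hdec ω, Finset.sum_mul]
        _ = ∑ i, ∫ ω, ((if N (n+1) ω = i then (1:ℂ) else 0) * (starRingEnd ℂ) (u i)) * f ω ∂μ :=
            integral_finset_sum _ fun i _ => hterm1 i
        _ = ∑ i, (starRingEnd ℂ) (u i) * ∫ ω, (if N (n+1) ω = i then (1:ℂ) else 0) * f ω ∂μ := by
            refine Finset.sum_congr rfl fun i _ => ?_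
            rw [← integral_const_mul]
            refine integral_congr_ae (ae_of_all _ fun ω => ?_)
            simp only
            ring
        _ = ∑ i, (starRingEnd ℂ) (u i) * ∫ ω, ((X n ω i / (r * ↑n + S) : ℝ) : ℂ) * f ω ∂μ := by
            refine Finset.sum_congr rfl fun i _ => ?_
            rw [hstarC n i f hfM ⟨Cf, hCf⟩ hfF]
        _ = ∑ i, ∫ ω, (starRingEnd ℂ) (u i) * (((X n ω i / (r * ↑n + S) : ℝ) : ℂ) * f ω) ∂μ := by
            refine Finset.sum_congr rfl fun i _ => ?_
            rw [integral_const_mul]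
        _ = ∫ ω, ∑ i, (starRingEnd ℂ) (u i) * (((X n ω i / (r * ↑n + S) : ℝ) : ℂ) * f ω) ∂μ :=
            (integral_finset_sum _ fun i _ => hterm2 i).symm
        _ = ∫ ω, ((r:ℂ) * n + S)⁻¹ * (π (X n ω) * f ω) ∂μ := by
            have hd0 : ((r * (n:ℝ) + S : ℝ) : ℂ) ≠ 0 := Complex.ofReal_ne_zero.2 (ne_of_gt (hrs n))
            refine integral_congr_ae (ae_of_all _ fun ω => ?_)
            simp only
            rw [hπ, hden n, Finset.sum_mul, Finset.mul_sum]
            refine Finset.sum_congr rfl fun i _ => ?_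
            rw [Complex.ofReal_div]
            field_simp
        _ = ((r:ℂ) * n + S)⁻¹ * ∫ ω, π (X n ω) * f ω ∂μ := integral_const_mul _ _
    calc ∫ ω, π (X (n+1) ω) * f ω ∂μ
        = ∫ ω, (π (X n ω) * f ω
            + (starRingEnd ℂ) lam * ((starRingEnd ℂ) (u (N (n+1) ω)) * f ω)) ∂μ := by
          refine integral_congr_ae (ae_of_all _ fun ω => ?_)
          simp only
          rw [hjump n ω]
          ring
      _ = (∫ ω, π (X n ω) * f ω ∂μ)
            + (starRingEnd ℂ) lam * ∫ ω, (starRingEnd ℂ) (u (N (n+1) ω)) * f ω ∂μ := by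
          rw [integral_add hi_pf (hi_cu.const_mul _), integral_const_mul]
      _ = (1 + a n) * ∫ ω, π (X n ω) * f ω ∂μ := by
          rw [hcu, ha]
          simp only
          ring
  set e : ℕ → ℂ := fun n => ∫ ω, π (X n ω) ∂μ with he
  have herec : ∀ n, e (n+1) = (1 + a n) * e n := by
    intro n
    have h := hkey n (fun _ => 1) measurable_const ⟨1, fun ω => by simp⟩
    simp only [he]
    simpa using h
  have hπeb : ∀ n, ∃ C, (0:ℝ) ≤ C ∧ ∀ ω, ‖π (X n ω) - e n‖ ≤ C := by
    intro n
    obtain ⟨C, hC⟩ := hπbd n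
    refine ⟨max C 0 + ‖e n‖, by positivity, fun ω => ?_⟩
    exact (norm_sub_le _ _).trans (add_le_add ((hC ω).trans (le_max_left _ _)) le_rfl)
  have hconjm : ∀ n, Measurable[F n] fun ω => (starRingEnd ℂ) (π (X n ω) - e n) := by
    intro n
    have hfe : (fun ω => (starRingEnd ℂ) (π (X n ω) - e n))
        = fun ω => star (π (X n ω) - e n) := rfl
    rw [hfe]
    exact (continuous_star.measurable).comp ((hπXm n).sub measurable_const)
  have horth : ∀ n, ∫ ω, (π (X (n+1) ω) - (1 + a n) * π (X n ω))
      * (starRingEnd ℂ) (π (X n ω) - e n) ∂μ = 0 := by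
    intro n
    obtain ⟨C, hC0, hC⟩ := hπeb n
    have hb : ∃ C, ∀ ω, ‖(starRingEnd ℂ) (π (X n ω) - e n)‖ ≤ C :=
      ⟨C, fun ω => by rw [RCLike.norm_conj]; exact hC ω⟩
    have h1 := hkey n _ (hconjm n) hb
    have hfM : Measurable fun ω => (starRingEnd ℂ) (π (X n ω) - e n) :=
      (hconjm n).mono (F.le n) le_rfl
    obtain ⟨C1, hC1⟩ := hπbd (n+1)
    obtain ⟨C2, hC2⟩ := hπbd n
    have hi1 : Integrable (fun ω => π (X (n+1) ω)
        * (starRingEnd ℂ) (π (X n ω) - e n)) μ := by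
      refine hint _ ((hπXM (n+1)).mul hfM).aestronglyMeasurable ⟨max C1 0 * C, fun ω => ?_⟩
      rw [norm_mul, RCLike.norm_conj]
      exact mul_le_mul ((hC1 ω).trans (le_max_left _ _)) (hC ω) (norm_nonneg _)
        (le_max_right _ _)
    have hi2 : Integrable (fun ω => π (X n ω)
        * (starRingEnd ℂ) (π (X n ω) - e n)) μ := by
      refine hint _ ((hπXM n).mul hfM).aestronglyMeasurable ⟨max C2 0 * C, fun ω => ?_⟩
      rw [norm_mul, RCLike.norm_conj]
      exact mul_le_mul ((hC2 ω).trans (le_max_left _ _)) (hC ω) (norm_nonneg _)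
        (le_max_right _ _)
    calc ∫ ω, (π (X (n+1) ω) - (1 + a n) * π (X n ω))
          * (starRingEnd ℂ) (π (X n ω) - e n) ∂μ
        = ∫ ω, (π (X (n+1) ω) * (starRingEnd ℂ) (π (X n ω) - e n)
            - (1 + a n) * (π (X n ω) * (starRingEnd ℂ) (π (X n ω) - e n))) ∂μ := by
          refine integral_congr_ae (ae_of_all _ fun ω => ?_)
          simp only
          ring
      _ = (∫ ω, π (X (n+1) ω) * (starRingEnd ℂ) (π (X n ω) - e n) ∂μ)
            - (1 + a n) * ∫ ω, π (X n ω) * (starRingEnd ℂ) (π (X n ω) - e n) ∂μ := by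
          rw [integral_sub hi1 (hi2.const_mul _), integral_const_mul]
      _ = 0 := by rw [h1]; ring
  -- second moments
  have hnsqm : ∀ (g : Ω → ℂ), Measurable g → Measurable fun ω => Complex.normSq (g ω) :=
    fun g hg => Complex.continuous_normSq.measurable.comp hg
  have hnsqint : ∀ (g : Ω → ℂ), Measurable g → (∃ C, ∀ ω, ‖g ω‖ ≤ C) →
      Integrable (fun ω => Complex.normSq (g ω)) μ := by
    rintro g hg ⟨C, hC⟩
    refine hintR _ (hnsqm g hg).aestronglyMeasurable ⟨(max C 0)^2, fun ω => ?_⟩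
    rw [abs_of_nonneg (Complex.normSq_nonneg _), ← Complex.sq_norm]
    have h1 : ‖g ω‖ ≤ max C 0 := (hC ω).trans (le_max_left _ _)
    have h2 : (0:ℝ) ≤ ‖g ω‖ := norm_nonneg _
    nlinarith
  set W : ℕ → ℝ := fun n => ∫ ω, Complex.normSq (π (X n ω) - e n) ∂μ with hW
  have hWnn : ∀ n, 0 ≤ W n := by
    intro n
    simp only [hW]
    exact integral_nonneg fun ω => Complex.normSq_nonneg _
  have hWrec : ∀ n, W (n+1)
      = (∫ ω, Complex.normSq (π (X (n+1) ω) - (1 + a n) * π (X n ω)) ∂μ)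
        + Complex.normSq (1 + a n) * W n := by
    intro n
    simp only [hW]
    obtain ⟨C, hCnn, hC⟩ := hπeb n
    obtain ⟨C1, hC1⟩ := hπbd (n+1)
    obtain ⟨C2, hC2⟩ := hπbd n
    have hDm : Measurable fun ω => π (X (n+1) ω) - (1 + a n) * π (X n ω) :=
      (hπXM (n+1)).sub (measurable_const.mul (hπXM n))
    have hDb : ∀ ω, ‖π (X (n+1) ω) - (1 + a n) * π (X n ω)‖
        ≤ max C1 0 + ‖1 + a n‖ * max C2 0 := by
      intro ω
      refine (norm_sub_le _ _).trans (add_le_add ((hC1 ω).trans (le_max_left _ _)) ?_)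
      rw [norm_mul]
      exact mul_le_mul_of_nonneg_left ((hC2 ω).trans (le_max_left _ _)) (norm_nonneg _)
    have hzm : Measurable fun ω => π (X n ω) - e n := (hπXM n).sub measurable_const
    have hi_nsqD := hnsqint _ hDm ⟨_, hDb⟩
    have hi_nsqz := hnsqint _ hzm ⟨C, hC⟩
    have hconjzm : Measurable fun ω => (starRingEnd ℂ) (π (X n ω) - e n) :=
      (hconjm n).mono (F.le n) le_rfl
    have hi_Dz : Integrable (fun ω => (π (X (n+1) ω) - (1 + a n) * π (X n ω))
        * (starRingEnd ℂ) (π (X n ω) - e n)) μ := by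
      refine hint _ (hDm.mul hconjzm).aestronglyMeasurable
        ⟨(max C1 0 + ‖1 + a n‖ * max C2 0) * C, fun ω => ?_⟩
      rw [norm_mul, RCLike.norm_conj]
      exact mul_le_mul (hDb ω) (hC ω) (norm_nonneg _) (by positivity)
    have hcr0 : ∫ ω, ((starRingEnd ℂ) (1 + a n) * ((π (X (n+1) ω) - (1 + a n) * π (X n ω))
        * (starRingEnd ℂ) (π (X n ω) - e n))).re ∂μ = 0 := by
      have h1 : ∫ ω, (starRingEnd ℂ) (1 + a n) * ((π (X (n+1) ω) - (1 + a n) * π (X n ω))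
          * (starRingEnd ℂ) (π (X n ω) - e n)) ∂μ = 0 := by
        rw [integral_const_mul, horth n, mul_zero]
      have h2 := integral_re (μ := μ) (hi_Dz.const_mul ((starRingEnd ℂ) (1 + a n)))
      simp only [RCLike.re_to_complex] at h2
      rw [h2, h1]
      simp
    have hpt : ∀ ω, Complex.normSq (π (X (n+1) ω) - e (n+1))
        = Complex.normSq (π (X (n+1) ω) - (1 + a n) * π (X n ω))
          + Complex.normSq (1 + a n) * Complex.normSq (π (X n ω) - e n)
          + 2 * ((starRingEnd ℂ) (1 + a n) * ((π (X (n+1) ω) - (1 + a n) * π (X n ω))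
              * (starRingEnd ℂ) (π (X n ω) - e n))).re := by
      intro ω
      have hsplit : π (X (n+1) ω) - e (n+1)
          = (π (X (n+1) ω) - (1 + a n) * π (X n ω)) + (1 + a n) * (π (X n ω) - e n) := by
        rw [herec n]; ring
      rw [hsplit, Complex.normSq_add, Complex.normSq_mul, map_mul, mul_left_comm]
      try ring
    have hiB : Integrable (fun ω => Complex.normSq (1 + a n)
        * Complex.normSq (π (X n ω) - e n)) μ := hi_nsqz.const_mul _
    have hiC : Integrable (fun ω => 2 * ((starRingEnd ℂ) (1 + a n)
        * ((π (X (n+1) ω) - (1 + a n) * π (X n ω))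
          * (starRingEnd ℂ) (π (X n ω) - e n))).re) μ := by
      have h3 := (hi_Dz.const_mul ((starRingEnd ℂ) (1 + a n))).re
      simp only [RCLike.re_to_complex] at h3
      exact h3.const_mul 2
    calc (∫ ω, Complex.normSq (π (X (n+1) ω) - e (n+1)) ∂μ)
        = ∫ ω, (Complex.normSq (π (X (n+1) ω) - (1 + a n) * π (X n ω))
            + (Complex.normSq (1 + a n) * Complex.normSq (π (X n ω) - e n)
              + 2 * ((starRingEnd ℂ) (1 + a n) * ((π (X (n+1) ω) - (1 + a n) * π (X n ω))
                  * (starRingEnd ℂ) (π (X n ω) - e n))).re)) ∂μ := by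
          refine integral_congr_ae (ae_of_all _ fun ω => ?_)
          simp only
          rw [hpt ω]
          ring
      _ = (∫ ω, Complex.normSq (π (X (n+1) ω) - (1 + a n) * π (X n ω)) ∂μ)
            + ∫ ω, (Complex.normSq (1 + a n) * Complex.normSq (π (X n ω) - e n)
              + 2 * ((starRingEnd ℂ) (1 + a n) * ((π (X (n+1) ω) - (1 + a n) * π (X n ω))
                  * (starRingEnd ℂ) (π (X n ω) - e n))).re) ∂μ :=
          integral_add hi_nsqD (hiB.add hiC)
      _ = (∫ ω, Complex.normSq (π (X (n+1) ω) - (1 + a n) * π (X n ω)) ∂μ)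
            + ((∫ ω, Complex.normSq (1 + a n) * Complex.normSq (π (X n ω) - e n) ∂μ)
              + ∫ ω, 2 * ((starRingEnd ℂ) (1 + a n) * ((π (X (n+1) ω) - (1 + a n) * π (X n ω))
                  * (starRingEnd ℂ) (π (X n ω) - e n))).re ∂μ) := by
          rw [integral_add hiB hiC]
      _ = (∫ ω, Complex.normSq (π (X (n+1) ω) - (1 + a n) * π (X n ω)) ∂μ)
            + (Complex.normSq (1 + a n) * (∫ ω, Complex.normSq (π (X n ω) - e n) ∂μ)
              + 2 * ∫ ω, ((starRingEnd ℂ) (1 + a n) * ((π (X (n+1) ω) - (1 + a n) * π (X n ω))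
                  * (starRingEnd ℂ) (π (X n ω) - e n))).re ∂μ) := by
          rw [integral_const_mul, integral_const_mul]
      _ = (∫ ω, Complex.normSq (π (X (n+1) ω) - (1 + a n) * π (X n ω)) ∂μ)
            + Complex.normSq (1 + a n) * ∫ ω, Complex.normSq (π (X n ω) - e n) ∂μ := by
          rw [hcr0]
          try ring
  -- relation to M
  have hMeq : ∀ n ω, M n ω = c n * (π (X n ω) - e n) := by
    intro n ω
    rw [hM n ω]
    try rfl
  have hMm : ∀ n, Measurable (M n) := by
    intro n
    have h : M n = fun ω => c n * (π (X n ω) - e n) := funext (hMeq n)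
    rw [h]
    exact measurable_const.mul ((hπXM n).sub measurable_const)
  have hMb : ∀ n, ∃ C, ∀ ω, ‖M n ω‖ ≤ C := by
    intro n
    obtain ⟨C, hC0, hC⟩ := hπeb n
    exact ⟨‖c n‖ * C, fun ω => by
      rw [hMeq n ω, norm_mul]
      exact mul_le_mul_of_nonneg_left (hC ω) (norm_nonneg _)⟩
  have hM2 : ∀ n, MemLp (M n) 2 μ := by
    intro n
    obtain ⟨C, hC⟩ := hMb n
    exact MemLp.of_bound (hMm n).aestronglyMeasurable C (ae_of_all _ hC)
  have hVW : ∀ n, (∫ ω, ‖M n ω‖^2 ∂μ) = Complex.normSq (c n) * W n := by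
    intro n
    simp only [hW]
    rw [← integral_const_mul]
    refine integral_congr_ae (ae_of_all _ fun ω => ?_)
    simp only
    rw [hMeq n ω, Complex.sq_norm, Complex.normSq_mul]
  have hVmono : ∀ n, Complex.normSq (c n) * W n ≤ Complex.normSq (c (n+1)) * W (n+1) := by
    intro n
    have h1 : Complex.normSq (c n) = Complex.normSq (c (n+1)) * Complex.normSq (1 + a n) := by
      rw [← Complex.normSq_mul, hcrec n]
    have hD0 : 0 ≤ ∫ ω, Complex.normSq (π (X (n+1) ω) - (1 + a n) * π (X n ω)) ∂μ :=
      integral_nonneg fun ω => Complex.normSq_nonneg _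
    rw [hWrec n, h1]
    nlinarith [mul_nonneg (Complex.normSq_nonneg (c (n+1))) hD0]
  have hmono : Monotone fun n => Complex.normSq (c n) * W n :=
    monotone_nat_of_le_succ hVmono
  -- limit is zero
  have hΞm : AEStronglyMeasurable Ξ μ :=
    aestronglyMeasurable_of_tendsto_ae atTop (fun n => (hMm n).aestronglyMeasurable) hlim
  obtain ⟨n0, hn0⟩ := (hL2.eventually_lt_const (by norm_num : (0:ENNReal) < 1)).exists
  have hΞ2 : MemLp Ξ 2 μ := by
    have h1 : MemLp (fun ω => M n0 ω - Ξ ω) 2 μ :=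
      ⟨(hMm n0).aestronglyMeasurable.sub hΞm, hn0.trans_le le_top⟩
    have h2 := (hM2 n0).sub h1
    have h3 : (M n0 - fun ω => M n0 ω - Ξ ω) = Ξ := by
      funext ω
      simp
    rwa [h3] at h2
  have hΞ0 : Ξ =ᵐ[μ] 0 := by
    have hi : Integrable (fun ω => ‖Ξ ω‖^2) μ := (memLp_two_iff_integrable_sq_norm hΞm).1 hΞ2
    have h := (integral_eq_zero_iff_of_nonneg_ae (ae_of_all _ fun ω => by positivity) hi).1 hvar
    filter_upwards [h] with ω hω
    have h1 : ‖Ξ ω‖ = 0 := (pow_eq_zero_iff (two_ne_zero)).1 hω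
    simpa using norm_eq_zero.1 h1
  have hL2' : Tendsto (fun n => eLpNorm (M n) 2 μ) atTop (nhds 0) := by
    have hcong : ∀ n, eLpNorm (M n) 2 μ = eLpNorm (fun ω => M n ω - Ξ ω) 2 μ := fun n =>
      eLpNorm_congr_ae (hΞ0.mono fun ω h => by simp [h])
    simp only [hcong]
    exact hL2
  have hVlim : Tendsto (fun n => ∫ ω, ‖M n ω‖^2 ∂μ) atTop (nhds 0) := by
    have h1 : Tendsto (fun n => (eLpNorm (M n) 2 μ).toReal) atTop (nhds 0) := by
      have h := (ENNReal.tendsto_toReal (by simp : (0:ENNReal) ≠ ⊤)).comp hL2'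
      simpa [Function.comp_def] using h
    have h2 : ∀ n, (eLpNorm (M n) 2 μ).toReal ^ 2 = ∫ ω, ‖M n ω‖^2 ∂μ := by
      intro n
      have hin : 0 ≤ ∫ ω, ‖M n ω‖^2 ∂μ := integral_nonneg fun ω => by positivity
      rw [(hM2 n).eLpNorm_eq_integral_rpow_norm two_ne_zero ENNReal.ofNat_ne_top]
      rw [ENNReal.toReal_ofReal (Real.rpow_nonneg (integral_nonneg fun ω => by positivity) _)]
      have h3 : ∫ ω, ‖M n ω‖ ^ ENNReal.toReal 2 ∂μ = ∫ ω, ‖M n ω‖^2 ∂μ := by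
        refine integral_congr_ae (ae_of_all _ fun ω => ?_)
        simp only
        rw [show ((2:ENNReal).toReal) = ((2:ℕ):ℝ) by norm_num, Real.rpow_natCast]
      rw [h3]
      rw [← Real.rpow_natCast ((∫ ω, ‖M n ω‖^2 ∂μ) ^ (ENNReal.toReal 2)⁻¹) 2,
        ← Real.rpow_mul hin]
      norm_num
    have h4 : Tendsto (fun n => (eLpNorm (M n) 2 μ).toReal ^ 2) atTop (nhds 0) := by
      have := h1.pow 2
      simpa using this
    simp only [h2] at h4
    exact h4
  have hWzero : ∀ n, W n = 0 := by
    intro n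
    have hle : ∀ m, n ≤ m → Complex.normSq (c n) * W n ≤ ∫ ω, ‖M m ω‖^2 ∂μ := by
      intro m hm
      rw [hVW m]
      exact hmono hm
    have h0 : Complex.normSq (c n) * W n ≤ 0 :=
      ge_of_tendsto hVlim (eventually_atTop.2 ⟨n, hle⟩)
    have h1 : 0 ≤ Complex.normSq (c n) * W n :=
      mul_nonneg (Complex.normSq_nonneg _) (hWnn n)
    have h2 : Complex.normSq (c n) * W n = 0 := le_antisymm h0 h1
    have hpos : 0 < Complex.normSq (c n) := Complex.normSq_pos.2 (hc0 n)
    rcases mul_eq_zero.1 h2 with h | h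
    · exact absurd h (ne_of_gt hpos)
    · exact h
  have hconst : ∀ n, ∀ᵐ ω ∂μ, π (X n ω) = e n := by
    intro n
    obtain ⟨C, hC0, hC⟩ := hπeb n
    have hi : Integrable (fun ω => Complex.normSq (π (X n ω) - e n)) μ :=
      hnsqint _ ((hπXM n).sub measurable_const) ⟨C, hC⟩
    have hW0 : ∫ ω, Complex.normSq (π (X n ω) - e n) ∂μ = 0 := by
      have := hWzero n
      simp only [hW] at this
      exact this
    have h := (integral_eq_zero_iff_of_nonneg_ae
      (ae_of_all _ fun ω => Complex.normSq_nonneg _) hi).1 hW0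
    filter_upwards [h] with ω hω
    exact sub_eq_zero.1 (Complex.normSq_eq_zero.1 hω)
  intro j
  filter_upwards [hconst j, hconst (j+1)] with ω h1 h2
  rw [h1, h2, herec j]
  ring
end

section
/- Characteristic polynomial of the m-ary search tree urn matrix: the eigenvalues of the (m−1)×(m−1) matrix R_m with diagonal entries −1, −2, …, −(m−1), subdiagonal entries 2, 3, …, m−1, top-right entry m, and zeros elsewhere, are exactly the complex solutions z of m! = ∏_{k=1}^{m−1} (z + k); in particular z = 1 is always an eigenvalue. -/
/-- `∏_{i<n} (i+2) = (n+1)!` in `ℂ`. -/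
lemma fact_prod (n : ℕ) : ∏ i ∈ Finset.range n, ((i : ℂ) + 2) = ((n + 1).factorial : ℂ) := by
  induction n with
  | zero => simp
  | succ n ih =>
    rw [Finset.prod_range_succ, ih]
    push_cast [Nat.factorial_succ]
    ring

lemma key_det (k : ℕ) (z : ℂ) (A : Matrix (Fin (k + 2)) (Fin (k + 2)) ℂ)
    (hA : ∀ i j : Fin (k + 2), A i j =
      if (i : ℕ) = (j : ℕ) + 1 then -((i : ℕ) + 1 : ℂ)
      else if (i : ℕ) = 0 ∧ (j : ℕ) = k + 1 then -((k : ℂ) + 3)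
      else if i = j then z + ((i : ℕ) + 1)
      else 0) :
    A.det = ∏ i ∈ Finset.range (k + 2), (z + ((i : ℂ) + 1)) - ((k + 3).factorial : ℂ) := by
  have h0last : (0 : Fin (k + 2)) ≠ Fin.last (k + 1) := by
    simp [Fin.ext_iff]
  rw [Matrix.det_succ_row_zero]
  have hzero : ∀ j : Fin (k + 2), j ∉ ({0, Fin.last (k + 1)} : Finset (Fin (k + 2))) →
      (-1 : ℂ) ^ (j : ℕ) * A 0 j * (A.submatrix Fin.succ j.succAbove).det = 0 := by
    intro j hj
    simp only [Finset.mem_insert, Finset.mem_singleton] at hj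
    push_neg at hj
    have h1 : (j : ℕ) ≠ 0 := fun h => hj.1 (by simp [Fin.ext_iff, h])
    have h2 : (j : ℕ) ≠ k + 1 := fun h => hj.2 (by simp [Fin.ext_iff, h])
    have : A 0 j = 0 := by
      rw [hA]
      simp only [Fin.val_zero]
      rw [if_neg (by omega), if_neg (by push_neg; intro; omega), if_neg]
      intro h; exact h1 (by simp [← h])
    simp [this]
  rw [← Finset.sum_subset (Finset.subset_univ {0, Fin.last (k + 1)}) (fun j _ hj => hzero j hj),
    Finset.sum_pair h0last]
  -- first term
  have hB : (A.submatrix Fin.succ (Fin.succAbove 0)).det = ∏ i : Fin (k + 1), (z + ((i : ℂ) + 2)) := by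
    rw [Matrix.det_of_lowerTriangular]
    · refine Finset.prod_congr rfl fun i _ => ?_
      simp only [Matrix.submatrix_apply, Fin.succAbove_zero, hA]
      split_ifs with h1 h2
      · simp [Fin.val_succ] at h1
      · simp [Fin.val_succ] at h2
      · push_cast [Fin.val_succ]; ring
    · intro i j hij
      simp only [Matrix.submatrix_apply, Fin.succAbove_zero, hA]
      have hij' : (i : ℕ) < (j : ℕ) := hij
      split_ifs with h1 h2 h3
      · simp only [Fin.val_succ] at h1; omega
      · simp [Fin.val_succ] at h2
      · rw [Fin.ext_iff] at h3; simp only [Fin.val_succ] at h3; omega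
      · rfl
  have hC : (A.submatrix Fin.succ (Fin.last (k + 1)).succAbove).det =
      ∏ i : Fin (k + 1), -((i : ℂ) + 2) := by
    rw [Matrix.det_of_upperTriangular]
    · refine Finset.prod_congr rfl fun i _ => ?_
      simp only [Matrix.submatrix_apply, Fin.succAbove_last, hA]
      rw [if_pos (by simp [Fin.val_succ, Fin.coe_castSucc])]
      push_cast [Fin.val_succ]; ring
    · intro i j hij
      simp only [Matrix.submatrix_apply, Fin.succAbove_last, hA]
      have hij' : (j : ℕ) < (i : ℕ) := hij
      split_ifs with h1 h2 h3
      · simp only [Fin.val_succ, Fin.coe_castSucc] at h1; omega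
      · simp [Fin.val_succ] at h2
      · rw [Fin.ext_iff] at h3; simp only [Fin.val_succ, Fin.coe_castSucc] at h3; omega
      · rfl
  have hA00 : A 0 0 = z + 1 := by rw [hA]; norm_num
  have hA0l : A 0 (Fin.last (k + 1)) = -((k : ℂ) + 3) := by
    rw [hA]; simp [Fin.last]
  rw [hB, hC, hA00, hA0l]
  have hprodC : ∏ i : Fin (k + 1), -((i : ℂ) + 2) =
      (-1) ^ (k + 1) * ((k + 2).factorial : ℂ) := by
    rw [show (fun i : Fin (k+1) => -((i : ℂ) + 2)) = fun i : Fin (k+1) => (-1) * ((i : ℂ) + 2) by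
      funext i; ring]
    rw [Finset.prod_mul_distrib, Finset.prod_const, Finset.card_univ, Fintype.card_fin,
      Fin.prod_univ_eq_prod_range (fun i => ((i : ℂ) + 2)), fact_prod]
  have hprodB : ∏ i : Fin (k + 1), (z + ((i : ℂ) + 2)) =
      ∏ i ∈ Finset.range (k + 1), (z + ((i : ℂ) + 2)) :=
    Fin.prod_univ_eq_prod_range (fun n : ℕ => z + ((n : ℂ) + 2)) (k + 1)
  rw [hprodB, hprodC]
  have hrange : ∏ i ∈ Finset.range (k + 2), (z + ((i : ℂ) + 1)) =
      (∏ i ∈ Finset.range (k + 1), (z + ((i : ℂ) + 2))) * (z + 1) := by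
    have h1 : ∏ i ∈ Finset.range (k + 1), (z + ((((i + 1 : ℕ)) : ℂ) + 1)) =
        ∏ i ∈ Finset.range (k + 1), (z + ((i : ℂ) + 2)) :=
      Finset.prod_congr rfl fun i _ => by push_cast; ring
    rw [Finset.prod_range_succ' (fun i => z + ((i : ℂ) + 1)), h1]
    norm_num
  rw [hrange]
  have hfact : ((k + 3).factorial : ℂ) = ((k : ℂ) + 3) * ((k + 2).factorial : ℂ) := by
    rw [show k + 3 = (k + 2) + 1 from rfl, Nat.factorial_succ]
    push_cast; ring
  rw [hfact]
  simp only [Fin.val_zero, Fin.val_last, pow_zero]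
  have hsq : ((-1 : ℂ)) ^ (k + 1) * (-1) ^ (k + 1) = 1 := by
    rw [← pow_add, ← two_mul, pow_mul]; norm_num
  linear_combination (-((k : ℂ) + 3) * ((k + 2).factorial : ℂ)) * hsq

/-- Characteristic polynomial of the `m`-ary search tree urn matrix: the
eigenvalues of the `(m−1) × (m−1)` matrix `R_m` (diagonal `−1, …, −(m−1)`,
subdiagonal `2, …, m−1`, top-right entry `m`) are exactly the complex solutions of
`m! = ∏_{k=1}^{m−1} (z + k)`; in particular `z = 1` is always an eigenvalue. -/
theorem mary_search_tree_eigenvalues (m : ℕ) (hm : 3 ≤ m)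
    (R : Matrix (Fin (m - 1)) (Fin (m - 1)) ℂ)
    (hR : ∀ i j : Fin (m - 1), R i j =
      if (i : ℕ) = (j : ℕ) + 1 then ((i : ℕ) + 1 : ℂ)
      else if (i : ℕ) = 0 ∧ (j : ℕ) = m - 2 then (m : ℂ)
      else if i = j then -((i : ℕ) + 1 : ℂ)
      else 0) :
    (∀ z : ℂ, z ∈ spectrum ℂ R ↔
      ∏ k ∈ Finset.Icc 1 (m - 1), (z + (k : ℂ)) = (Nat.factorial m : ℂ)) ∧
    (1 : ℂ) ∈ spectrum ℂ R := by
  obtain ⟨k, rfl⟩ : ∃ k, m = k + 3 := ⟨m - 3, by omega⟩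
  revert hR R
  show ∀ (R : Matrix (Fin (k + 2)) (Fin (k + 2)) ℂ),
    (∀ i j : Fin (k + 2), R i j =
      if (i : ℕ) = (j : ℕ) + 1 then ((i : ℕ) + 1 : ℂ)
      else if (i : ℕ) = 0 ∧ (j : ℕ) = k + 1 then ((k + 3 : ℕ) : ℂ)
      else if i = j then -((i : ℕ) + 1 : ℂ)
      else 0) →
    (∀ z : ℂ, z ∈ spectrum ℂ R ↔
      ∏ j ∈ Finset.Icc 1 (k + 2), (z + (j : ℂ)) = (Nat.factorial (k + 3) : ℂ)) ∧
    (1 : ℂ) ∈ spectrum ℂ R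
  intro R hR
  have hmain : ∀ z : ℂ, z ∈ spectrum ℂ R ↔
      ∏ j ∈ Finset.Icc 1 (k + 2), (z + (j : ℂ)) = ((k + 3).factorial : ℂ) := by
    intro z
    set A : Matrix (Fin (k + 2)) (Fin (k + 2)) ℂ :=
      algebraMap ℂ (Matrix (Fin (k + 2)) (Fin (k + 2)) ℂ) z - R with hAdef
    have hA : ∀ i j : Fin (k + 2), A i j =
        if (i : ℕ) = (j : ℕ) + 1 then -((i : ℕ) + 1 : ℂ)
        else if (i : ℕ) = 0 ∧ (j : ℕ) = k + 1 then -((k : ℂ) + 3)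
        else if i = j then z + ((i : ℕ) + 1)
        else 0 := by
      intro i j
      rw [hAdef, Matrix.sub_apply, Matrix.algebraMap_matrix_apply, hR i j]
      simp only [Algebra.algebraMap_self, RingHom.id_apply, Fin.ext_iff]
      split_ifs <;> first | (push_cast; ring1) | (exfalso; omega)
    have hdet : A.det = ∏ i ∈ Finset.range (k + 2), (z + ((i : ℂ) + 1)) -
        ((k + 3).factorial : ℂ) := key_det k z A hA
    have hspec : z ∈ spectrum ℂ R ↔ A.det = 0 := by
      rw [spectrum.mem_iff, ← hAdef, Matrix.isUnit_iff_isUnit_det, isUnit_iff_ne_zero, not_not]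
    have hIcc : ∏ j ∈ Finset.Icc 1 (k + 2), (z + (j : ℂ)) =
        ∏ i ∈ Finset.range (k + 2), (z + ((i : ℂ) + 1)) := by
      rw [← Finset.Ico_add_one_right_eq_Icc, Finset.prod_Ico_eq_prod_range]
      exact Finset.prod_congr (by norm_num) fun i _ => by push_cast; ring
    rw [hspec, hdet, sub_eq_zero, hIcc]
  refine ⟨hmain, ?_⟩
  rw [hmain 1]
  have : ∏ j ∈ Finset.Icc 1 (k + 2), ((1 : ℂ) + (j : ℂ)) =
      ∏ i ∈ Finset.range (k + 2), ((i : ℂ) + 2) := by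
    rw [← Finset.Ico_add_one_right_eq_Icc, Finset.prod_Ico_eq_prod_range]
    exact Finset.prod_congr (by norm_num) fun i _ => by push_cast; ring
  rw [this, fact_prod]
end

section
/- Characteristic polynomial of the B-urn matrix: the eigenvalues of the m×m matrix R_m with diagonal entries −m, −(m+1), …, −(2m−1), subdiagonal entries m+1, m+2, …, 2m−1, top-right entry 2m, and zeros elsewhere, are exactly the solutions z of (2m)!/m! = ∏_{k=m}^{2m−1} (z + k); all these roots are simple, z = 1 is a root, and every other root λ satisfies Re(λ) < 1. -/
open Polynomial Finset Matrix

lemma burn_factorial_div (m : ℕ) :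
    ((2*m).factorial / m.factorial : ℕ) = ∏ k ∈ Finset.Ico (m+1) (2*m+1), k := by
  have h : (∏ k ∈ Finset.Ico 1 (m+1), k) * ∏ k ∈ Finset.Ico (m+1) (2*m+1), k
      = ∏ k ∈ Finset.Ico 1 (2*m+1), k :=
    Finset.prod_Ico_consecutive _ (by omega) (by omega)
  rw [Finset.prod_Ico_id_eq_factorial, Finset.prod_Ico_id_eq_factorial] at h
  rw [← h, Nat.mul_div_cancel_left _ (Nat.factorial_pos m)]

lemma burn_cast_prod (K : Type*) [CommRing K] [CharZero K] (m : ℕ) :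
    (((2*m).factorial / m.factorial : ℕ) : K) = ∏ i ∈ Finset.range m, ((m:K) + 1 + i) := by
  rw [burn_factorial_div, Nat.cast_prod, Finset.prod_Ico_eq_prod_range]
  have h : 2*m+1-(m+1) = m := by omega
  rw [h]
  exact Finset.prod_congr rfl fun i _ => by push_cast; ring

lemma burn_det (n : ℕ) (z : ℂ) (A : Matrix (Fin (n+2)) (Fin (n+2)) ℂ)
    (hA : ∀ i j : Fin (n+2), A i j =
      if i = j then z + (n+2 : ℕ) + (i : ℕ)
      else if (i:ℕ) = (j:ℕ)+1 then -(((n+2:ℕ) : ℂ) + (i:ℕ))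
      else if (i:ℕ) = 0 ∧ (j:ℕ) = n+1 then -((2*(n+2) : ℕ) : ℂ)
      else 0) :
    A.det = ∏ i ∈ Finset.range (n+2), (z + (n+2:ℕ) + i)
      - ((2*(n+2) : ℕ) : ℂ) * ∏ i ∈ Finset.range (n+1), (((n+2:ℕ) : ℂ) + 1 + i) := by
  rw [det_succ_row_zero]
  have key : ∀ j : Fin (n+2), j ∉ ({0, Fin.last (n+1)} : Finset (Fin (n+2))) → A 0 j = 0 := by
    intro j hj
    simp only [Finset.mem_insert, Finset.mem_singleton] at hj
    push_neg at hj
    have h1 : (j:ℕ) ≠ 0 := fun h => hj.1 (Fin.ext h)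
    have h2 : (j:ℕ) ≠ n+1 := fun h => hj.2 (Fin.ext h)
    rw [hA]
    split_ifs with e1 e2 e3
    · exact absurd e1.symm hj.1
    · simp at e2
    · exact absurd e3.2 h2
    · rfl
  rw [← Finset.sum_subset (Finset.subset_univ ({0, Fin.last (n+1)} : Finset (Fin (n+2))))
    (fun j _ hj => by rw [key j hj]; ring)]
  rw [Finset.sum_pair (by simp [Fin.ext_iff])]
  have h00 : A 0 0 = z + ((n+2:ℕ) : ℂ) := by
    rw [hA, if_pos rfl]; simp
  have h0l : A 0 (Fin.last (n+1)) = -((2*(n+2) : ℕ) : ℂ) := by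
    rw [hA, if_neg (by simp [Fin.ext_iff]), if_neg (by simp), if_pos (by simp [Fin.ext_iff])]
  have hm0 : det (A.submatrix Fin.succ ((0 : Fin (n+2)).succAbove))
      = ∏ i ∈ Finset.range (n+1), (z + ((n+2:ℕ) : ℂ) + ((i:ℕ)+1 : ℕ)) := by
    rw [Fin.succAbove_zero, Matrix.det_of_lowerTriangular _ ?_]
    · rw [← Fin.prod_univ_eq_prod_range (fun i => z + ((n+2:ℕ):ℂ) + ((i:ℕ)+1 : ℕ))]
      refine Finset.prod_congr rfl fun i _ => ?_
      rw [Matrix.submatrix_apply, hA, if_pos rfl, Fin.val_succ]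
    · intro i j h
      replace h : i < j := h
      rw [Matrix.submatrix_apply, hA]
      rw [if_neg (by simp [Fin.ext_iff]; omega), if_neg (by simp; omega),
        if_neg (by simp)]
  have hml : det (A.submatrix Fin.succ ((Fin.last (n+1)).succAbove))
      = (-1)^(n+1) * ∏ i ∈ Finset.range (n+1), (((n+2:ℕ) : ℂ) + 1 + (i:ℕ)) := by
    rw [Fin.succAbove_last, Matrix.det_of_upperTriangular ?_]
    · have : ∀ i : Fin (n+1), A i.succ i.castSucc = (-1) * (((n+2:ℕ):ℂ) + 1 + (i:ℕ)) := by
        intro i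
        rw [hA, if_neg (by simp [Fin.ext_iff]), if_pos (by simp), Fin.val_succ]
        push_cast
        ring
      calc ∏ i : Fin (n+1), (A.submatrix Fin.succ Fin.castSucc) i i
          = ∏ i : Fin (n+1), (-1) * (((n+2:ℕ):ℂ) + 1 + (i:ℕ)) :=
            Finset.prod_congr rfl fun i _ => by rw [Matrix.submatrix_apply, this i]
        _ = (-1)^(n+1) * ∏ i ∈ Finset.range (n+1), (((n+2:ℕ) : ℂ) + 1 + (i:ℕ)) := by
            rw [Finset.prod_mul_distrib, Finset.prod_const, Finset.card_univ,
              Fintype.card_fin, ← Fin.prod_univ_eq_prod_range (fun i => ((n+2:ℕ):ℂ) + 1 + (i:ℕ))]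
    · intro i j h
      replace h : j < i := h
      rw [Matrix.submatrix_apply, hA]
      rw [if_neg (by simp [Fin.ext_iff]; omega), if_neg (by simp; try omega),
        if_neg (by simp; try omega)]
  rw [h00, h0l, hm0, hml]
  have hlast : ((Fin.last (n+1) : Fin (n+2)) : ℕ) = n+1 := rfl
  rw [hlast]
  have hsq : ((-1:ℂ))^(n+1) * (-((2*(n+2) : ℕ) : ℂ)) * ((-1)^(n+1) * ∏ i ∈ Finset.range (n+1), (((n+2:ℕ) : ℂ) + 1 + (i:ℕ)))
      = -(((2*(n+2) : ℕ) : ℂ) * ∏ i ∈ Finset.range (n+1), (((n+2:ℕ) : ℂ) + 1 + (i:ℕ))) := by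
    have : ((-1:ℂ))^(n+1) * ((-1:ℂ))^(n+1) = 1 := by
      rw [← pow_add]
      exact Even.neg_one_pow ⟨n+1, by ring⟩
    calc ((-1:ℂ))^(n+1) * (-((2*(n+2) : ℕ) : ℂ)) * ((-1)^(n+1) * ∏ i ∈ Finset.range (n+1), (((n+2:ℕ) : ℂ) + 1 + (i:ℕ)))
        = ((-1:ℂ))^(n+1) * ((-1:ℂ))^(n+1) * (-(((2*(n+2) : ℕ) : ℂ) * ∏ i ∈ Finset.range (n+1), (((n+2:ℕ) : ℂ) + 1 + (i:ℕ)))) := by ring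
      _ = _ := by rw [this]; try ring
  have hprod : ∏ i ∈ Finset.range (n+2), (z + ((n+2:ℕ) : ℂ) + (i:ℕ))
      = (z + ((n+2:ℕ) : ℂ)) * ∏ i ∈ Finset.range (n+1), (z + ((n+2:ℕ) : ℂ) + ((i:ℕ)+1 : ℕ)) := by
    conv_lhs => rw [Finset.prod_range_succ']
    rw [Nat.cast_zero, add_zero, mul_comm]
  simp only [Fin.val_zero, pow_zero, one_mul]
  rw [hsq, hprod]
  ring

lemma burn_eval_deriv (s : Finset ℕ) (a : ℕ → ℂ) (t : ℂ) :
    Polynomial.eval t (Polynomial.derivative (∏ i ∈ s, (X + C (a i))))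
      = ∑ j ∈ s, ∏ i ∈ s.erase j, (t + a i) := by
  induction s using Finset.induction_on with
  | empty => simp
  | @insert b s hb ih =>
    rw [Finset.prod_insert hb, derivative_mul, eval_add, eval_mul, eval_mul, ih]
    rw [derivative_add, derivative_X, derivative_C, add_zero, eval_one, one_mul]
    rw [eval_prod]
    simp only [eval_add, eval_X, eval_C]
    rw [Finset.sum_insert hb, Finset.erase_insert hb]
    have : ∀ j ∈ s, ∏ i ∈ (insert b s).erase j, (t + a i)
        = (t + a b) * ∏ i ∈ s.erase j, (t + a i) := by
      intro j hj
      have hbj : b ≠ j := fun h => hb (h ▸ hj)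
      rw [Finset.erase_insert_of_ne hbj,
        Finset.prod_insert (fun h => hb (Finset.mem_of_mem_erase h))]
    rw [Finset.sum_congr rfl this, ← Finset.mul_sum]

/-- Characteristic polynomial of the B-urn matrix: the eigenvalues of the `m × m`
matrix `R_m` (diagonal `−m, …, −(2m−1)`, subdiagonal `m+1, …, 2m−1`, top-right
entry `2m`) are exactly the solutions of `(2m)!/m! = ∏_{k=m}^{2m−1} (z + k)`;
all roots are simple, `z = 1` is a root, and every other root has real part `< 1`. -/
theorem b_urn_eigenvalues (m : ℕ) (hm : 2 ≤ m)
    (R : Matrix (Fin m) (Fin m) ℂ)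
    (hR : ∀ i j : Fin m, R i j =
      if (i : ℕ) = (j : ℕ) + 1 then ((m : ℂ) + (i : ℕ))
      else if (i : ℕ) = 0 ∧ (j : ℕ) = m - 1 then (2 * m : ℂ)
      else if i = j then -((m : ℂ) + (i : ℕ))
      else 0) :
    (∀ z : ℂ, z ∈ spectrum ℂ R ↔
      ∏ k ∈ Finset.Ico m (2 * m), (z + (k : ℂ)) =
        ((Nat.factorial (2 * m) / Nat.factorial m : ℕ) : ℂ)) ∧
    (∀ z : ℂ, z ∈ spectrum ℂ R → (Matrix.charpoly R).rootMultiplicity z = 1) ∧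
    (1 : ℂ) ∈ spectrum ℂ R ∧
    (∀ z : ℂ, z ∈ spectrum ℂ R → z ≠ 1 → z.re < 1) := by
  obtain ⟨n, rfl⟩ : ∃ n, m = n + 2 := ⟨m - 2, by omega⟩
  set Cm : ℕ := (2*(n+2)).factorial / (n+2).factorial with hCm
  -- determinant of z•1 - R
  have hdet : ∀ z : ℂ, (Matrix.scalar (Fin (n+2)) z - R).det
      = ∏ i ∈ Finset.range (n+2), (z + ((n+2:ℕ):ℂ) + (i:ℕ)) - (Cm : ℂ) := by
    intro z
    have hA : ∀ i j : Fin (n+2), (Matrix.scalar (Fin (n+2)) z - R) i j =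
        if i = j then z + ((n+2:ℕ):ℂ) + (i:ℕ)
        else if (i:ℕ) = (j:ℕ)+1 then -(((n+2:ℕ) : ℂ) + (i:ℕ))
        else if (i:ℕ) = 0 ∧ (j:ℕ) = n+1 then -((2*(n+2) : ℕ) : ℂ)
        else 0 := by
      intro i j
      rw [Matrix.sub_apply, Matrix.scalar_apply, Matrix.diagonal_apply, hR i j]
      by_cases hij : i = j
      · subst hij
        have c1 : ¬((i:ℕ) = (i:ℕ)+1) := by omega
        have c2 : ¬((i:ℕ) = 0 ∧ (i:ℕ) = n+2-1) := by omega
        simp only [c1, c2, if_true, if_false, eq_self_iff_true]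
        push_cast; ring
      · rw [if_neg hij, if_neg hij, zero_sub]
        have hij' : (i:ℕ) ≠ (j:ℕ) := fun h => hij (Fin.ext h)
        split_ifs <;>
          first
            | (push_cast; ring1)
            | (exact absurd ‹i = j› hij)
            | (exfalso; omega)
    rw [burn_det n z _ hA]
    have h1 : (Cm : ℂ) = ((2*(n+2) : ℕ) : ℂ) * ∏ i ∈ Finset.range (n+1), (((n+2:ℕ) : ℂ) + 1 + (i:ℕ)) := by
      rw [hCm, burn_cast_prod ℂ (n+2), Finset.prod_range_succ]
      push_cast; ring
    rw [h1]
  -- spectrum membership iff det vanishes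
  have hspec : ∀ z : ℂ, z ∈ spectrum ℂ R ↔
      ∏ i ∈ Finset.range (n+2), (z + ((n+2:ℕ):ℂ) + (i:ℕ)) = (Cm : ℂ) := by
    intro z
    rw [spectrum.mem_iff]
    have halg : (algebraMap ℂ (Matrix (Fin (n+2)) (Fin (n+2)) ℂ)) z = Matrix.scalar (Fin (n+2)) z := rfl
    rw [halg, ← not_iff_not, not_not, Matrix.isUnit_iff_isUnit_det, isUnit_iff_ne_zero,
      hdet z, sub_ne_zero]
  -- bridge between Ico product and range product
  have hbridge : ∀ z : ℂ, ∏ k ∈ Finset.Ico (n+2) (2*(n+2)), (z + (k:ℂ))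
      = ∏ i ∈ Finset.range (n+2), (z + ((n+2:ℕ):ℂ) + (i:ℕ)) := by
    intro z
    rw [Finset.prod_Ico_eq_prod_range]
    have h2 : 2*(n+2) - (n+2) = n+2 := by omega
    rw [h2]
    exact Finset.prod_congr rfl fun i _ => by push_cast; ring
  have hCmpos : 0 < Cm := Nat.div_pos (Nat.factorial_le (by omega)) (n+2).factorial_pos
  have hCmne : (Cm : ℂ) ≠ 0 := Nat.cast_ne_zero.mpr hCmpos.ne'
  -- the charpoly
  have hcp : Matrix.charpoly R
      = (∏ i ∈ Finset.range (n+2), (X + C (((n+2:ℕ):ℂ) + (i:ℕ)))) - C (Cm:ℂ) := by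
    apply Polynomial.funext
    intro z
    rw [Matrix.charpoly, _root_.eval_det, matPolyEquiv_charmatrix, Polynomial.eval_sub,
      Polynomial.eval_X, Polynomial.eval_C, hdet z]
    rw [Polynomial.eval_sub, Polynomial.eval_C, Polynomial.eval_prod]
    simp only [Polynomial.eval_add, Polynomial.eval_X, Polynomial.eval_C]
    congr 1
    try exact Finset.prod_congr rfl fun i _ => by ring
  refine ⟨fun z => by rw [hspec z, hbridge z], ?_, ?_, ?_⟩
  · -- simplicity
    intro z hz
    rw [hspec z] at hz
    have hz' : ∏ i ∈ Finset.range (n+2), (z + (((n+2:ℕ):ℂ) + (i:ℕ))) = (Cm:ℂ) := by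
      rw [← hz]; exact Finset.prod_congr rfl fun i _ => by ring
    have hfac : ∀ i ∈ Finset.range (n+2), z + (((n+2:ℕ):ℂ) + (i:ℕ)) ≠ 0 := by
      intro i hi h0
      exact hCmne (by rw [← hz']; exact Finset.prod_eq_zero hi h0)
    -- the derivative does not vanish at z
    have hderivne : ¬ (Polynomial.derivative
        ((∏ i ∈ Finset.range (n+2), (X + C (((n+2:ℕ):ℂ) + (i:ℕ)))) - C ((Cm:ℕ):ℂ))).IsRoot z := by
      intro hd
      rw [Polynomial.IsRoot, Polynomial.derivative_sub, Polynomial.derivative_C, sub_zero,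
        burn_eval_deriv (Finset.range (n+2)) (fun i => ((n+2:ℕ):ℂ) + (i:ℕ)) z] at hd
      -- convert to vanishing of the sum of inverses
      have hT : ∑ j ∈ Finset.range (n+2), (z + (((n+2:ℕ):ℂ) + (j:ℕ)))⁻¹ = 0 := by
        have hsum : ∑ j ∈ Finset.range (n+2), ∏ i ∈ (Finset.range (n+2)).erase j,
            (z + (((n+2:ℕ):ℂ) + (i:ℕ)))
            = (Cm:ℂ) * ∑ j ∈ Finset.range (n+2), (z + (((n+2:ℕ):ℂ) + (j:ℕ)))⁻¹ := by
          rw [Finset.mul_sum]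
          refine Finset.sum_congr rfl fun j hj => ?_
          have hmul := Finset.mul_prod_erase (Finset.range (n+2))
            (fun i => z + (((n+2:ℕ):ℂ) + (i:ℕ))) hj
          rw [hz'] at hmul
          have hmul' : (z + (((n+2:ℕ):ℂ) + (j:ℕ))) * ∏ i ∈ (Finset.range (n+2)).erase j,
              (z + (((n+2:ℕ):ℂ) + (i:ℕ))) = (Cm:ℂ) := hmul
          rw [eq_mul_inv_iff_mul_eq₀ (hfac j hj), mul_comm]
          exact hmul'
        rw [hsum] at hd
        rcases mul_eq_zero.mp hd with h | h
        · exact absurd h hCmne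
        · exact h
      -- the imaginary part forces z to be real
      have him : z.im = 0 := by
        by_contra him
        have himT : (∑ j ∈ Finset.range (n+2), (z + (((n+2:ℕ):ℂ) + (j:ℕ)))⁻¹).im
            = ∑ j ∈ Finset.range (n+2), (-z.im / Complex.normSq (z + (((n+2:ℕ):ℂ) + (j:ℕ)))) := by
          rw [Complex.im_sum]
          refine Finset.sum_congr rfl fun j hj => ?_
          rw [Complex.inv_im]
          congr 1
          simp
        rw [hT, Complex.zero_im] at himT
        have hnsq : ∀ j ∈ Finset.range (n+2),
            0 < Complex.normSq (z + (((n+2:ℕ):ℂ) + (j:ℕ))) :=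
          fun j hj => Complex.normSq_pos.mpr (hfac j hj)
        rcases lt_or_gt_of_ne him with hneg | hpos
        · -- z.im < 0 : each term positive
          have : (0:ℝ) < ∑ j ∈ Finset.range (n+2), (-z.im / Complex.normSq (z + (((n+2:ℕ):ℂ) + (j:ℕ)))) :=
            Finset.sum_pos (fun j hj => div_pos (by linarith) (hnsq j hj)) ⟨0, by simp⟩
          linarith [himT, this]
        · have : ∑ j ∈ Finset.range (n+2), (-z.im / Complex.normSq (z + (((n+2:ℕ):ℂ) + (j:ℕ)))) < 0 := by
            have := Finset.sum_lt_sum_of_nonempty (⟨0, by simp⟩ : (Finset.range (n+2)).Nonempty)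
              (f := fun j => (-z.im / Complex.normSq (z + (((n+2:ℕ):ℂ) + (j:ℕ))))) (g := fun _ => (0:ℝ))
              (fun j hj => div_neg_of_neg_of_pos (by linarith) (hnsq j hj))
            simpa using this
          linarith [himT, this]
      obtain ⟨x, rfl⟩ : ∃ x : ℝ, z = (x:ℂ) := ⟨z.re, (Complex.ext (by simp) (by simp [him])).symm⟩
      -- real sum of inverses vanishes
      have hTreal : ∑ j ∈ Finset.range (n+2), (x + ((n+2:ℕ):ℝ) + (j:ℕ))⁻¹ = 0 := by
        rw [← Complex.ofReal_eq_zero, Complex.ofReal_sum, ← hT]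
        refine Finset.sum_congr rfl fun j hj => ?_
        push_cast
        ring
      have hfacR : ∀ j ∈ Finset.range (n+2), x + ((n+2:ℕ):ℝ) + (j:ℕ) ≠ 0 := by
        intro j hj h0
        refine hfac j hj ?_
        rw [show ((x:ℂ) + (((n+2:ℕ):ℂ) + (j:ℕ))) = ((x + ((n+2:ℕ):ℝ) + (j:ℕ) : ℝ) : ℂ) by push_cast; ring,
          h0, Complex.ofReal_zero]
      -- x must lie strictly between -(2n+3) and -(n+2)
      have hx1 : x + ((n+2:ℕ):ℝ) < 0 := by
        by_contra h
        push_neg at h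
        have : (0:ℝ) < ∑ j ∈ Finset.range (n+2), (x + ((n+2:ℕ):ℝ) + (j:ℕ))⁻¹ := by
          refine Finset.sum_pos (fun j hj => inv_pos.mpr ?_) ⟨0, by simp⟩
          rcases lt_or_eq_of_le (show (0:ℝ) ≤ x + ((n+2:ℕ):ℝ) + (j:ℕ) by positivity) with h' | h'
          · exact h'
          · exact absurd h'.symm (hfacR j hj)
        linarith [hTreal]
      have hx2 : 0 < x + ((n+2:ℕ):ℝ) + ((n+1:ℕ):ℝ) := by
        by_contra h
        push_neg at h
        have hneg : ∀ j ∈ Finset.range (n+2), (x + ((n+2:ℕ):ℝ) + (j:ℕ))⁻¹ < 0 := by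
          intro j hj
          refine inv_lt_zero.mpr ?_
          have hjn := Finset.mem_range.mp hj
          have hjle : (j:ℝ) ≤ ((n+1:ℕ):ℝ) := by
            exact_mod_cast Nat.cast_le.mpr (show j ≤ n+1 by omega)
          rcases lt_or_eq_of_le (show x + ((n+2:ℕ):ℝ) + (j:ℕ) ≤ 0 by push_cast at hjle h ⊢; linarith) with h' | h'
          · exact h'
          · exact absurd h' (hfacR j hj)
        have : ∑ j ∈ Finset.range (n+2), (x + ((n+2:ℕ):ℝ) + (j:ℕ))⁻¹ < 0 := by
          have := Finset.sum_lt_sum_of_nonempty (⟨0, by simp⟩ : (Finset.range (n+2)).Nonempty)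
            (f := fun j => (x + ((n+2:ℕ):ℝ) + (j:ℕ))⁻¹) (g := fun _ => (0:ℝ)) hneg
          simpa using this
        linarith [hTreal]
      -- but then the product is too small in absolute value
      have hprodR : ∏ j ∈ Finset.range (n+2), (x + ((n+2:ℕ):ℝ) + (j:ℕ)) = (Cm:ℝ) := by
        have : ((∏ j ∈ Finset.range (n+2), (x + ((n+2:ℕ):ℝ) + (j:ℕ)) : ℝ) : ℂ) = ((Cm:ℝ) : ℂ) := by
          rw [Complex.ofReal_prod, Complex.ofReal_natCast, ← hz']
          exact Finset.prod_congr rfl fun j _ => by push_cast; ring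
        exact_mod_cast this
      have hltR : ∀ j ∈ Finset.range (n+2), |x + ((n+2:ℕ):ℝ) + (j:ℕ)| < ((n+2:ℕ):ℝ) + 1 + (j:ℕ) := by
        intro j hj
        rw [abs_lt]
        have := Finset.mem_range.mp hj
        push_cast at hx1 hx2 ⊢
        constructor <;> linarith
      have hfinal : (Cm:ℝ) < (Cm:ℝ) := by
        calc (Cm:ℝ) = |(Cm:ℝ)| := (abs_of_nonneg (by positivity)).symm
          _ = |∏ j ∈ Finset.range (n+2), (x + ((n+2:ℕ):ℝ) + (j:ℕ))| := by rw [hprodR]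
          _ = ∏ j ∈ Finset.range (n+2), |x + ((n+2:ℕ):ℝ) + (j:ℕ)| := Finset.abs_prod _ _
          _ < ∏ j ∈ Finset.range (n+2), (((n+2:ℕ):ℝ) + 1 + (j:ℕ)) :=
              Finset.prod_lt_prod_of_nonempty
                (fun j hj => abs_pos.mpr (hfacR j hj)) hltR ⟨0, by simp⟩
          _ = (Cm:ℝ) := by rw [hCm]; exact (burn_cast_prod ℝ (n+2)).symm
      exact lt_irrefl _ hfinal
    -- now conclude multiplicity one
    have hPne : ((∏ i ∈ Finset.range (n+2), (X + C (((n+2:ℕ):ℂ) + (i:ℕ)))) - C ((Cm:ℕ):ℂ)) ≠ 0 := by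
      rw [← hcp]
      exact (Matrix.charpoly_monic R).ne_zero
    have hroot : ((∏ i ∈ Finset.range (n+2), (X + C (((n+2:ℕ):ℂ) + (i:ℕ)))) - C ((Cm:ℕ):ℂ)).IsRoot z := by
      rw [Polynomial.IsRoot, Polynomial.eval_sub, Polynomial.eval_C, Polynomial.eval_prod]
      simp only [Polynomial.eval_add, Polynomial.eval_X, Polynomial.eval_C]
      rw [hz']
      ring
    rw [hcp]
    have h1 : 0 < Polynomial.rootMultiplicity z
        ((∏ i ∈ Finset.range (n+2), (X + C (((n+2:ℕ):ℂ) + (i:ℕ)))) - C ((Cm:ℕ):ℂ)) :=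
      (Polynomial.rootMultiplicity_pos hPne).mpr hroot
    have h2 : ¬ 1 < Polynomial.rootMultiplicity z
        ((∏ i ∈ Finset.range (n+2), (X + C (((n+2:ℕ):ℂ) + (i:ℕ)))) - C ((Cm:ℕ):ℂ)) := by
      rw [Polynomial.one_lt_rootMultiplicity_iff_isRoot hPne]
      rintro ⟨-, hd⟩
      exact hderivne hd
    omega
  · -- 1 is an eigenvalue
    rw [hspec 1]
    rw [burn_cast_prod ℂ (n+2)]
    exact Finset.prod_congr rfl fun i _ => by ring
  · -- other eigenvalues have re < 1
    intro z hz hz1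
    by_contra hre
    push_neg at hre
    rw [hspec z] at hz
    have habs : ∏ i ∈ Finset.range (n+2), ‖z + ((n+2:ℕ):ℂ) + (i:ℕ)‖ = (Cm:ℝ) := by
      rw [← Complex.norm_prod, hz, Complex.norm_natCast]
    have hlt : ∀ i ∈ Finset.range (n+2),
        ((n+2:ℕ):ℝ) + 1 + (i:ℕ) < ‖z + ((n+2:ℕ):ℂ) + (i:ℕ)‖ := by
      intro i _
      set w : ℂ := z + ((n+2:ℕ):ℂ) + (i:ℕ) with hw
      have hwre : w.re = z.re + ((n+2:ℕ):ℝ) + (i:ℕ) := by simp [hw]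
      have hwim : w.im = z.im := by simp [hw]
      rcases eq_or_ne z.im 0 with him | him
      · have hzre : z.re ≠ 1 := fun h => hz1 (Complex.ext (by simp [h]) (by simp [him]))
        have h3 : ((n+2:ℕ):ℝ) + 1 + (i:ℕ) < w.re := by
          rw [hwre]
          have : 1 < z.re := lt_of_le_of_ne hre (Ne.symm hzre)
          linarith
        calc ((n+2:ℕ):ℝ) + 1 + (i:ℕ) < w.re := h3
          _ ≤ |w.re| := le_abs_self _
          _ ≤ ‖w‖ := Complex.abs_re_le_norm w
      · have h1 : ((n+2:ℕ):ℝ) + 1 + (i:ℕ) ≤ w.re := by rw [hwre]; linarith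
        calc ((n+2:ℕ):ℝ) + 1 + (i:ℕ) ≤ w.re := h1
          _ ≤ |w.re| := le_abs_self _
          _ < ‖w‖ := Complex.abs_re_lt_norm.mpr (by rw [hwim]; exact him)
    have hfin : (Cm:ℝ) < (Cm:ℝ) := by
      calc (Cm:ℝ) = ∏ i ∈ Finset.range (n+2), (((n+2:ℕ):ℝ) + 1 + (i:ℕ)) := by
            rw [hCm]; exact burn_cast_prod ℝ (n+2)
        _ < ∏ i ∈ Finset.range (n+2), ‖z + ((n+2:ℕ):ℂ) + (i:ℕ)‖ :=
            Finset.prod_lt_prod_of_nonempty (fun i _ => by positivity) hlt ⟨0, by simp⟩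
        _ = (Cm:ℝ) := habs
    exact lt_irrefl _ hfin
end
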